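/- arXiv:2512.17808 — 3 statements merged into one kernel-verified Lean document; each statement's English description precedes it below -/
import Mathlib

section
/- For any t > 0, any polynomial P of degree m ≥ 1, and any z ∈ ℂ, the heat-evolved polynomial satisfies the Gaussian integral representation: e^{-(s/2)∂_z²} P(z) = (-i/√(2πs)) ∫_{iℝ} exp((z-u)²/(2s)) P(u) du, where s = t/(αn) > 0 and the integral is over the imaginary axis (parametrized as u = iy, y ∈ ℝ, du = i dy). -/
open Polynomial MeasureTheory

/-- The backward heat flow operator applied to a polynomial:
`e^{-(s/2)∂_z²} P = Σ_k (-s/2)^k ∂^{2k} P / k!` (a terminating sum). -/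
noncomputable def heatFlow (s : ℂ) (P : Polynomial ℂ) : Polynomial ℂ :=
  ∑ k ∈ Finset.range (P.natDegree + 1),
    ((-s / 2) ^ k / (Nat.factorial k : ℂ)) • (Polynomial.derivative^[2 * k] P)

open Complex

-- core integrability
lemma re_quad (b c d : ℂ) (x : ℝ) : (b*x^2 + c*x + d).re = b.re*x^2 + c.re*x + d.re := by
  simp [Complex.add_re, Complex.mul_re, ← Complex.ofReal_pow]

lemma integrable_cexp_quadratic_mul_pow {b : ℂ} (hb : b.re < 0) (c d : ℂ) (m : ℕ) :
    Integrable (fun x : ℝ => Complex.exp (b*x^2 + c*x + d) * (x:ℂ)^m) := by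
  have hb2 : (b/2).re < 0 := by
    rw [div_ofNat_re]; linarith
  set C : ℝ := (m.factorial : ℝ) * (2 / (-b.re))^m with hCdef
  have hbpos : (0:ℝ) < -b.re := by linarith
  have hC0 : 0 ≤ C := mul_nonneg (Nat.cast_nonneg _) (pow_nonneg (by positivity) m)
  have h1 := (integrable_cexp_quadratic' hb c d).norm
  have h2 := ((integrable_cexp_quadratic' hb2 c d).norm.const_mul C)
  have hcont : Continuous fun x : ℝ => Complex.exp (b*x^2 + c*x + d) * (x:ℂ)^m := by
    fun_prop
  refine (h1.add h2).mono' hcont.aestronglyMeasurable ?_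
  filter_upwards with x
  simp only [Pi.add_apply]
  have hxnorm : ‖Complex.exp (b*x^2 + c*x + d) * (x:ℂ)^m‖
      = Real.exp (b.re*x^2 + c.re*x + d.re) * |x|^m := by
    rw [norm_mul, Complex.norm_exp, re_quad,
      norm_pow, Complex.norm_real, Real.norm_eq_abs]
  rw [hxnorm]
  have hE1 : ‖Complex.exp (b*x^2 + c*x + d)‖ = Real.exp (b.re*x^2 + c.re*x + d.re) := by
    rw [Complex.norm_exp, re_quad]
  have hE2 : ‖Complex.exp (b/2*x^2 + c*x + d)‖ = Real.exp (b.re/2*x^2 + c.re*x + d.re) := by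
    rw [Complex.norm_exp, re_quad, div_ofNat_re]
  rw [hE1, hE2]
  -- key pointwise bound
  have key : |x|^m ≤ 1 + C * Real.exp (-b.re/2 * x^2) := by
    rcases le_or_gt (|x|) 1 with h | h
    · have : |x|^m ≤ 1 := pow_le_one₀ (abs_nonneg x) h
      have : (0:ℝ) ≤ C * Real.exp (-b.re/2 * x^2) := by positivity
      linarith
    · have h1 : |x|^m ≤ (x^2)^m := by
        calc |x|^m ≤ |x|^(2*m) := pow_le_pow_right₀ h.le (by omega)
          _ = (x^2)^m := by rw [pow_mul, _root_.sq_abs]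
      have ht : (0:ℝ) ≤ -b.re/2 * x^2 := by positivity
      have h2 : (-b.re/2 * x^2)^m / (m.factorial : ℝ) ≤ Real.exp (-b.re/2 * x^2) :=
        Real.pow_div_factorial_le_exp _ ht m
      have h3 : (x^2)^m = (-b.re/2 * x^2)^m * (2/(-b.re))^m := by
        rw [← mul_pow]
        congr 1
        have : b.re ≠ 0 := by linarith
        field_simp
      have hfac : (0:ℝ) < (m.factorial : ℝ) := by positivity
      have h4 : (-b.re/2 * x^2)^m ≤ (m.factorial:ℝ) * Real.exp (-b.re/2 * x^2) := by
        rw [div_le_iff₀ hfac] at h2; linarith [h2]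
      have h5 : (x^2)^m ≤ C * Real.exp (-b.re/2 * x^2) := by
        rw [h3, hCdef]
        calc (-b.re/2 * x^2)^m * (2/(-b.re))^m
            ≤ ((m.factorial:ℝ) * Real.exp (-b.re/2 * x^2)) * (2/(-b.re))^m := by
              apply mul_le_mul_of_nonneg_right h4 (by positivity)
          _ = (m.factorial : ℝ) * (2 / (-b.re))^m * Real.exp (-b.re/2 * x^2) := by ring
      linarith [h1]
  have e2 : Real.exp (b.re*x^2 + c.re*x + d.re) * Real.exp (-b.re/2 * x^2)
      = Real.exp (b.re/2*x^2 + c.re*x + d.re) := by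
    rw [← Real.exp_add]; ring_nf
  calc Real.exp (b.re*x^2 + c.re*x + d.re) * |x|^m
      ≤ Real.exp (b.re*x^2 + c.re*x + d.re) * (1 + C * Real.exp (-b.re/2 * x^2)) :=
        mul_le_mul_of_nonneg_left key (Real.exp_nonneg _)
    _ = Real.exp (b.re*x^2 + c.re*x + d.re)
        + C * (Real.exp (b.re*x^2 + c.re*x + d.re) * Real.exp (-b.re/2 * x^2)) := by ring
    _ = Real.exp (b.re*x^2 + c.re*x + d.re) + C * Real.exp (b.re/2*x^2 + c.re*x + d.re) := by
        rw [e2]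

section Main
variable {s : ℝ} (z : ℂ)

/-- The (unnormalized) contour integral. -/
noncomputable def Jint (s : ℝ) (z : ℂ) (Q : Polynomial ℂ) : ℂ :=
  ∫ y : ℝ, Complex.exp ((z - Complex.I*y)^2 / (2*(s:ℂ))) * Q.eval (Complex.I*y)

lemma exponent_eq (hs : s ≠ 0) (y : ℝ) :
    (z - Complex.I*y)^2 / (2*(s:ℂ))
      = (((-(1/(2*s)) : ℝ)):ℂ)*(y:ℂ)^2 + (-(Complex.I*z)/(s:ℂ))*(y:ℂ) + z^2/(2*(s:ℂ)) := by
  have hsC : (s:ℂ) ≠ 0 := Complex.ofReal_ne_zero.2 hs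
  push_cast
  field_simp
  linear_combination ((y:ℂ)^2) * Complex.I_sq

lemma integrable_g_pow (hs : 0 < s) (m : ℕ) :
    Integrable (fun y : ℝ =>
      Complex.exp ((z - Complex.I*y)^2 / (2*(s:ℂ))) * (Complex.I*y)^m) := by
  have hb : ((((-(1/(2*s)) : ℝ)):ℂ)).re < 0 := by
    rw [Complex.ofReal_re]
    have : 0 < 1/(2*s) := by positivity
    linarith
  have h := (integrable_cexp_quadratic_mul_pow hb (-(Complex.I*z)/(s:ℂ))
      (z^2/(2*(s:ℂ))) m).const_mul (Complex.I^m)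
  apply h.congr
  filter_upwards with y
  rw [exponent_eq z hs.ne' y, mul_pow]
  ring

lemma integrable_g_poly (hs : 0 < s) (Q : Polynomial ℂ) :
    Integrable (fun y : ℝ =>
      Complex.exp ((z - Complex.I*y)^2 / (2*(s:ℂ))) * Q.eval (Complex.I*y)) := by
  have : ∀ y : ℝ, Complex.exp ((z - Complex.I*y)^2 / (2*(s:ℂ))) * Q.eval (Complex.I*y)
      = ∑ k ∈ Finset.range (Q.natDegree + 1),
          Q.coeff k * (Complex.exp ((z - Complex.I*y)^2 / (2*(s:ℂ))) * (Complex.I*y)^k) := by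
    intro y
    rw [Polynomial.eval_eq_sum_range, Finset.mul_sum]
    congr 1; funext k; ring
  simp_rw [this]
  exact integrable_finset_sum _ (fun k _ => (integrable_g_pow z hs k).const_mul _)

lemma Jint_base (hs : 0 < s) :
    Jint s z 1 = (Real.sqrt (2 * Real.pi * s) : ℂ) := by
  have hsC : (s:ℂ) ≠ 0 := Complex.ofReal_ne_zero.2 hs.ne'
  have hb : ((((-(1/(2*s)) : ℝ)):ℂ)).re < 0 := by
    rw [Complex.ofReal_re]
    have : 0 < 1/(2*s) := by positivity
    linarith
  have h := integral_cexp_quadratic hb (-(Complex.I*z)/(s:ℂ)) (z^2/(2*(s:ℂ)))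
  rw [Jint]
  simp_rw [Polynomial.eval_one, mul_one]
  rw [show (fun y:ℝ => Complex.exp ((z - Complex.I*y)^2 / (2*(s:ℂ))))
      = (fun y:ℝ => Complex.exp ((((-(1/(2*s)) : ℝ)):ℂ)*(y:ℂ)^2
          + (-(Complex.I*z)/(s:ℂ))*(y:ℂ) + z^2/(2*(s:ℂ)))) from
    funext fun y => by rw [exponent_eq z hs.ne' y], h]
  have h1 : z^2/(2*(s:ℂ)) - (-(Complex.I*z)/(s:ℂ))^2 / (4 * (((-(1/(2*s)) : ℝ)):ℂ)) = 0 := by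
    push_cast
    field_simp
    linear_combination (4*z^2) * Complex.I_sq
  rw [h1, Complex.exp_zero, mul_one]
  have h2 : (Real.pi : ℂ) / -(((-(1/(2*s)) : ℝ)):ℂ) = ((2*Real.pi*s : ℝ) : ℂ) := by
    push_cast
    field_simp
  rw [h2]
  rw [Real.sqrt_eq_rpow, Complex.ofReal_cpow (by positivity : (0:ℝ) ≤ 2*Real.pi*s)]
  norm_num

lemma Jint_rec (hs : 0 < s) (Q : Polynomial ℂ) :
    Jint s z (Polynomial.X * Q) = z * Jint s z Q - s * Jint s z (Polynomial.derivative Q) := by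
  have hsC : (s:ℂ) ≠ 0 := Complex.ofReal_ne_zero.2 hs.ne'
  set A : ℝ → ℂ := fun y => Complex.exp ((z - Complex.I*y)^2 / (2*(s:ℂ))) with hA
  have hg : ∀ y : ℝ, HasDerivAt (fun y:ℝ => Complex.exp ((z - Complex.I*y)^2 / (2*(s:ℂ))))
      (A y * (-Complex.I*(z - Complex.I*y)/(s:ℂ))) y := by
    intro y
    have h1 : HasDerivAt (fun w:ℂ => z - Complex.I*w) (-Complex.I) (y:ℂ) := by
      simpa using ((hasDerivAt_id (y:ℂ)).const_mul Complex.I).const_sub z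
    have h2 := ((h1.pow 2).div_const (2*(s:ℂ))).cexp.comp_ofReal
    refine h2.congr_deriv ?_
    rw [hA]
    simp only [Pi.pow_apply]
    push_cast
    ring
  have hQd : ∀ y : ℝ, HasDerivAt (fun y:ℝ => Q.eval (Complex.I*↑y))
      (Complex.I * (Polynomial.derivative Q).eval (Complex.I*↑y)) y := by
    intro y
    have h1 : HasDerivAt (fun w:ℂ => Complex.I*w) Complex.I (y:ℂ) := by
      simpa using (hasDerivAt_id (y:ℂ)).const_mul Complex.I
    have h2 := (Q.hasDerivAt (Complex.I*(y:ℂ))).comp (y:ℂ) h1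
    simpa [Function.comp, mul_comm] using h2.comp_ofReal
  set F : ℝ → ℂ := fun y => A y * Q.eval (Complex.I*y) with hF
  set F' : ℝ → ℂ := fun y =>
      (Complex.I/(s:ℂ)) * (A y * (Polynomial.X*Q).eval (Complex.I*y))
      + (-(Complex.I*z)/(s:ℂ)) * (A y * Q.eval (Complex.I*y))
      + Complex.I * (A y * (Polynomial.derivative Q).eval (Complex.I*y)) with hF'
  have hf : ∀ y : ℝ, HasDerivAt F (F' y) y := by
    intro y
    have := (hg y).mul (hQd y)
    refine this.congr_deriv ?_
    rw [hF']
    simp only [Polynomial.eval_mul, Polynomial.eval_X]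
    ring
  have I1 := integrable_g_poly z hs (Polynomial.X*Q)
  have I2 := integrable_g_poly z hs Q
  have I3 := integrable_g_poly z hs (Polynomial.derivative Q)
  have hFint : Integrable F := I2
  have hF'int : Integrable F' :=
    ((I1.const_mul _).add (I2.const_mul _)).add (I3.const_mul _)
  have h0 : ∫ y : ℝ, F' y = 0 :=
    MeasureTheory.integral_eq_zero_of_hasDerivAt_of_integrable hf hF'int hFint
  rw [hF'] at h0
  beta_reduce at h0
  have I1' : Integrable (fun y : ℝ =>
      (Complex.I/(s:ℂ)) * (A y * (Polynomial.X*Q).eval (Complex.I*y))) := I1.const_mul _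
  have I2' : Integrable (fun y : ℝ =>
      (-(Complex.I*z)/(s:ℂ)) * (A y * Q.eval (Complex.I*y))) := I2.const_mul _
  have I3' : Integrable (fun y : ℝ =>
      Complex.I * (A y * (Polynomial.derivative Q).eval (Complex.I*y))) := I3.const_mul _
  have I12 : Integrable (fun y : ℝ =>
      (Complex.I/(s:ℂ)) * (A y * (Polynomial.X*Q).eval (Complex.I*y))
      + (-(Complex.I*z)/(s:ℂ)) * (A y * Q.eval (Complex.I*y))) := I1'.add I2'
  have e3 : (∫ y : ℝ, ((Complex.I/(s:ℂ)) * (A y * (Polynomial.X*Q).eval (Complex.I*y))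
        + (-(Complex.I*z)/(s:ℂ)) * (A y * Q.eval (Complex.I*y))
        + Complex.I * (A y * (Polynomial.derivative Q).eval (Complex.I*y))))
      = (∫ y : ℝ, ((Complex.I/(s:ℂ)) * (A y * (Polynomial.X*Q).eval (Complex.I*y))
        + (-(Complex.I*z)/(s:ℂ)) * (A y * Q.eval (Complex.I*y))))
        + ∫ y : ℝ, Complex.I * (A y * (Polynomial.derivative Q).eval (Complex.I*y)) :=
    MeasureTheory.integral_add I12 I3'
  have e2 : (∫ y : ℝ, ((Complex.I/(s:ℂ)) * (A y * (Polynomial.X*Q).eval (Complex.I*y))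
        + (-(Complex.I*z)/(s:ℂ)) * (A y * Q.eval (Complex.I*y))))
      = (∫ y : ℝ, (Complex.I/(s:ℂ)) * (A y * (Polynomial.X*Q).eval (Complex.I*y)))
        + ∫ y : ℝ, (-(Complex.I*z)/(s:ℂ)) * (A y * Q.eval (Complex.I*y)) :=
    MeasureTheory.integral_add I1' I2'
  have ea : (∫ y : ℝ, (Complex.I/(s:ℂ)) * (A y * (Polynomial.X*Q).eval (Complex.I*y)))
      = (Complex.I/(s:ℂ)) * Jint s z (Polynomial.X*Q) := integral_const_mul _ _
  have eb : (∫ y : ℝ, (-(Complex.I*z)/(s:ℂ)) * (A y * Q.eval (Complex.I*y)))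
      = (-(Complex.I*z)/(s:ℂ)) * Jint s z Q := integral_const_mul _ _
  have ec : (∫ y : ℝ, Complex.I * (A y * (Polynomial.derivative Q).eval (Complex.I*y)))
      = Complex.I * Jint s z (Polynomial.derivative Q) := integral_const_mul _ _
  have h0' : (Complex.I/(s:ℂ)) * Jint s z (Polynomial.X*Q)
      + (-(Complex.I*z)/(s:ℂ)) * Jint s z Q
      + Complex.I * Jint s z (Polynomial.derivative Q) = 0 := by
    rw [← ea, ← eb, ← ec, ← e2, ← e3]
    exact h0
  field_simp at h0'
  linear_combination (-Complex.I) * h0' + (Jint s z (Polynomial.X*Q) - z * Jint s z Q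
    + s * Jint s z (Polynomial.derivative Q)) * Complex.I_sq

end Main

noncomputable def HF (s : ℂ) (N : ℕ) (P : Polynomial ℂ) : Polynomial ℂ :=
  ∑ k ∈ Finset.range N,
    ((-s / 2) ^ k / (Nat.factorial k : ℂ)) • (Polynomial.derivative^[2 * k] P)

lemma heatFlow_eq_HF (s : ℂ) (P : Polynomial ℂ) {N : ℕ} (h : P.natDegree < N) :
    heatFlow s P = HF s N P := by
  rw [heatFlow, HF]
  apply Finset.sum_subset (Finset.range_subset_range.2 (by omega))
  intro k _ hk
  rw [Finset.mem_range, not_lt] at hk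
  rw [Polynomial.iterate_derivative_eq_zero (by omega), smul_zero]

lemma HF_C_mul (s : ℂ) (N : ℕ) (a : ℂ) (P : Polynomial ℂ) :
    HF s N (Polynomial.C a * P) = Polynomial.C a * HF s N P := by
  rw [HF, HF, Finset.mul_sum]
  refine Finset.sum_congr rfl fun k _ => ?_
  rw [Polynomial.iterate_derivative_C_mul, mul_smul_comm]

lemma HF_deriv (s : ℂ) (N : ℕ) (P : Polynomial ℂ) :
    Polynomial.derivative (HF s N P) = HF s N (Polynomial.derivative P) := by
  rw [HF, HF, map_sum]
  refine Finset.sum_congr rfl fun k _ => ?_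
  rw [Polynomial.derivative_smul]
  congr 1
  rw [← Function.iterate_succ_apply' Polynomial.derivative, Function.iterate_succ_apply]

lemma iterate_derivative_X_mul (P : Polynomial ℂ) :
    ∀ n : ℕ, Polynomial.derivative^[n+1] (Polynomial.X * P)
      = Polynomial.X * Polynomial.derivative^[n+1] P
        + (n+1) • Polynomial.derivative^[n] P := by
  intro n
  induction n with
  | zero =>
      simp only [zero_add, Function.iterate_one, Function.iterate_zero_apply,
        Polynomial.derivative_mul, Polynomial.derivative_X, one_mul, one_smul]
      exact add_comm _ _
  | succ n ih =>
      rw [Function.iterate_succ_apply' Polynomial.derivative (n+1), ih]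
      rw [map_add, Polynomial.derivative_mul, Polynomial.derivative_X, one_mul,
        Polynomial.derivative_smul]
      rw [← Function.iterate_succ_apply' Polynomial.derivative (n+1),
        ← Function.iterate_succ_apply' Polynomial.derivative n]
      rw [succ_nsmul ((Polynomial.derivative^[n+1]) P) (n+1)]
      abel

lemma coeff_id (s : ℂ) (k : ℕ) :
    ((-s/2)^(k+1) / ((k+1).factorial : ℂ)) * (2*(k:ℂ)+2)
      = -s * ((-s/2)^k / (k.factorial : ℂ)) := by
  have hfac : (k.factorial : ℂ) ≠ 0 := Nat.cast_ne_zero.2 (Nat.factorial_ne_zero k)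
  have hk1 : ((k:ℂ)+1) ≠ 0 := Nat.cast_add_one_ne_zero k
  rw [Nat.factorial_succ, Nat.cast_mul, pow_succ]
  push_cast
  field_simp

lemma HF_deriv_sum (s : ℂ) (N : ℕ) (P : Polynomial ℂ) :
    Polynomial.derivative (HF s N P)
      = ∑ k ∈ Finset.range N,
          ((-s / 2) ^ k / (Nat.factorial k : ℂ)) • Polynomial.derivative^[2*k+1] P := by
  rw [HF, map_sum]
  refine Finset.sum_congr rfl fun k _ => ?_
  rw [Polynomial.derivative_smul, ← Function.iterate_succ_apply' Polynomial.derivative]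

lemma HF_X_mul (s : ℂ) (N : ℕ) (P : Polynomial ℂ) :
    HF s (N+1) (Polynomial.X * P)
      = Polynomial.X * HF s (N+1) P - s • Polynomial.derivative (HF s N P) := by
  rw [HF, HF, Finset.sum_range_succ', Finset.sum_range_succ']
  have hterm : ∀ k : ℕ, ((-s / 2) ^ (k+1) / (Nat.factorial (k+1) : ℂ))
        • (Polynomial.derivative^[2 * (k+1)] (Polynomial.X * P))
      = ((-s / 2) ^ (k+1) / (Nat.factorial (k+1) : ℂ))
          • (Polynomial.X * Polynomial.derivative^[2*(k+1)] P)
        + (-s) • (((-s / 2) ^ k / (Nat.factorial k : ℂ))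
            • Polynomial.derivative^[2*k+1] P) := by
    intro k
    have h2k : 2 * (k+1) = (2*k+1) + 1 := by omega
    rw [h2k, iterate_derivative_X_mul, smul_add]
    have h2k' : 2 * (k+1) = (2*k+1) + 1 := by omega
    congr 1
    rw [← Nat.cast_smul_eq_nsmul ℂ, smul_smul, smul_smul]
    congr 1
    push_cast
    linear_combination coeff_id s k
  rw [Finset.sum_congr rfl (fun k _ => hterm k), Finset.sum_add_distrib, ← Finset.smul_sum,
    HF_deriv_sum, mul_add, Finset.mul_sum]
  simp only [mul_smul_comm, neg_smul, mul_zero, pow_zero, Nat.factorial_zero, Nat.cast_one,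
    div_one, one_smul, Function.iterate_zero_apply]
  abel

lemma HF_sum {ι : Type*} (s : ℂ) (N : ℕ) (t : Finset ι) (f : ι → Polynomial ℂ) :
    HF s N (∑ i ∈ t, f i) = ∑ i ∈ t, HF s N (f i) := by
  simp only [HF, Polynomial.iterate_derivative_sum, Finset.smul_sum]
  exact Finset.sum_comm

lemma Jint_C_mul (s : ℝ) (z a : ℂ) (Q : Polynomial ℂ) :
    Jint s z (Polynomial.C a * Q) = a * Jint s z Q := by
  rw [Jint, Jint, ← integral_const_mul]
  congr 1
  funext y
  simp only [Polynomial.eval_mul, Polynomial.eval_C]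
  ring

lemma heatFlow_one (s : ℂ) : heatFlow s 1 = 1 := by
  simp [heatFlow]

lemma Jint_monomial {s : ℝ} (hs : 0 < s) (z : ℂ) (m : ℕ) :
    Jint s z (Polynomial.X^m)
      = (Real.sqrt (2*Real.pi*s) : ℂ) * (heatFlow (s:ℂ) (Polynomial.X^m)).eval z := by
  induction m using Nat.strong_induction_on with
  | _ m ih =>
    match m with
    | 0 =>
        rw [pow_zero, Jint_base z hs, heatFlow_one, Polynomial.eval_one, mul_one]
    | (m+1) =>
        have hrec := Jint_rec z hs (Polynomial.X^m)
        rw [← pow_succ'] at hrec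
        rw [Polynomial.derivative_X_pow, Jint_C_mul] at hrec
        rw [hrec, ih m (by omega), ih (m-1) (by omega)]
        -- heat flow side identities
        have e1 : heatFlow (s:ℂ) (Polynomial.X^(m+1))
            = HF (s:ℂ) (m+2) (Polynomial.X^(m+1)) :=
          heatFlow_eq_HF _ _ (by rw [Polynomial.natDegree_X_pow]; omega)
        have e2 : HF (s:ℂ) (m+2) (Polynomial.X^(m+1))
            = Polynomial.X * HF (s:ℂ) (m+2) (Polynomial.X^m)
              - (s:ℂ) • Polynomial.derivative (HF (s:ℂ) (m+1) (Polynomial.X^m)) := by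
          rw [← HF_X_mul, ← pow_succ']
        have e3 : HF (s:ℂ) (m+2) (Polynomial.X^m) = heatFlow (s:ℂ) (Polynomial.X^m) :=
          (heatFlow_eq_HF _ _ (by rw [Polynomial.natDegree_X_pow]; omega)).symm
        have e4 : Polynomial.derivative (HF (s:ℂ) (m+1) (Polynomial.X^m))
            = Polynomial.C (m:ℂ) * heatFlow (s:ℂ) (Polynomial.X^(m-1)) := by
          rw [HF_deriv, Polynomial.derivative_X_pow, HF_C_mul]
          congr 1
          exact (heatFlow_eq_HF _ _ (by rw [Polynomial.natDegree_X_pow]; omega)).symm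
        rw [e1, e2, e3, e4]
        rw [Polynomial.eval_sub, Polynomial.eval_mul, Polynomial.eval_X, Polynomial.smul_eq_C_mul,
          Polynomial.eval_mul, Polynomial.eval_C, Polynomial.eval_mul, Polynomial.eval_C]
        ring

lemma Jint_poly {s : ℝ} (hs : 0 < s) (z : ℂ) (P : Polynomial ℂ) :
    Jint s z P = (Real.sqrt (2*Real.pi*s) : ℂ) * (heatFlow (s:ℂ) P).eval z := by
  have hJsum : Jint s z P
      = ∑ k ∈ Finset.range (P.natDegree + 1), P.coeff k * Jint s z (Polynomial.X^k) := by
    rw [Jint]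
    have hpt : ∀ y : ℝ, Complex.exp ((z - Complex.I*y)^2 / (2*(s:ℂ))) * P.eval (Complex.I*y)
        = ∑ k ∈ Finset.range (P.natDegree + 1),
            P.coeff k * (Complex.exp ((z - Complex.I*y)^2 / (2*(s:ℂ))) * (Complex.I*y)^k) := by
      intro y
      rw [Polynomial.eval_eq_sum_range, Finset.mul_sum]
      congr 1; funext k; ring
    simp_rw [hpt]
    rw [MeasureTheory.integral_finset_sum _
      (fun k _ => (integrable_g_pow z hs k).const_mul _)]
    refine Finset.sum_congr rfl fun k _ => ?_
    rw [integral_const_mul]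
    congr 1
    rw [Jint]
    congr 1; funext y
    simp
  have hH : (heatFlow (s:ℂ) P).eval z
      = ∑ k ∈ Finset.range (P.natDegree + 1),
          P.coeff k * (heatFlow (s:ℂ) (Polynomial.X^k)).eval z := by
    set n := P.natDegree with hn
    have hP' : P = ∑ i ∈ Finset.range (n + 1), Polynomial.monomial i (P.coeff i) :=
      P.as_sum_range' (n + 1) (Nat.lt_succ_self _)
    rw [heatFlow_eq_HF (s:ℂ) P (Nat.lt_succ_self _), ← hn]
    conv_lhs => rw [hP']
    rw [HF_sum, Polynomial.eval_finset_sum]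
    refine Finset.sum_congr rfl fun k hk => ?_
    rw [← Polynomial.C_mul_X_pow_eq_monomial, HF_C_mul, Polynomial.eval_mul, Polynomial.eval_C]
    congr 2
    refine (heatFlow_eq_HF _ _ ?_).symm
    rw [Polynomial.natDegree_X_pow]
    exact Finset.mem_range.1 hk
  rw [hJsum, hH, Finset.mul_sum]
  refine Finset.sum_congr rfl fun k _ => ?_
  rw [Jint_monomial hs z k]
  ring

/-- Gaussian contour-integral representation of the heat flow:
`e^{-(s/2)∂_z²} P(z) = (-i/√(2πs)) ∫_{iℝ} exp((z-u)²/(2s)) P(u) du`,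
with `s = t/(αn) > 0` and the integral over the imaginary axis parametrized as
`u = iy`, `du = i dy`. -/
theorem heat_flow_gaussian_integral_rep
    (P : Polynomial ℂ) (hP : 1 ≤ P.natDegree)
    (t : ℝ) (ht : 0 < t) (α n : ℕ) (hα : 0 < α) (hn : 0 < n)
    (s : ℝ) (hs : s = t / (α * n)) (z : ℂ) :
    (heatFlow (s : ℂ) P).eval z
      = (-Complex.I / (Real.sqrt (2 * Real.pi * s) : ℂ)) *
          ∫ y : ℝ, Complex.exp ((z - Complex.I * y) ^ 2 / (2 * (s : ℂ)))
            * P.eval (Complex.I * y) * Complex.I := by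
  have hs0 : 0 < s := by
    rw [hs]
    exact div_pos ht (mul_pos (Nat.cast_pos.2 hα) (Nat.cast_pos.2 hn))
  have hsq : (0:ℝ) < Real.sqrt (2 * Real.pi * s) :=
    Real.sqrt_pos.2 (by positivity)
  have hsqC : ((Real.sqrt (2 * Real.pi * s) : ℝ) : ℂ) ≠ 0 :=
    Complex.ofReal_ne_zero.2 hsq.ne'
  have hint : (∫ y : ℝ, Complex.exp ((z - Complex.I * y) ^ 2 / (2 * (s : ℂ)))
        * P.eval (Complex.I * y) * Complex.I)
      = Jint s z P * Complex.I := by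
    rw [Jint, ← integral_mul_const]
  rw [hint, Jint_poly hs0 z P]
  have hII : (-Complex.I) * Complex.I = 1 := by simp [Complex.I_mul_I]
  set c : ℂ := ((Real.sqrt (2 * Real.pi * s) : ℝ) : ℂ) with hc
  set E : ℂ := (heatFlow (s:ℂ) P).eval z with hE
  calc E = ((-Complex.I) * Complex.I) * (c/c) * E := by
        rw [hII, div_self hsqC, one_mul, one_mul]
    _ = (-Complex.I / c) * ((c * E) * Complex.I) := by ring
end

section
/- Let P(z) = ∏_{j=1}^d (z−λ_j)^{α_j} with α = Σα_j, let n ∈ ℕ, t > 0, and let P_t^n = e^{−(t/(2αn))∂_z²} P^n be the heat-evolved n-th power. Then every zero of P_t^n lies within distance 2√t·√(1 + 1/(2nα)) of some λ_j; i.e., the zero set of P_t^n is contained in ⋃_{j=1}^d B(λ_j, 2√t·√(1+1/(2nα))). -/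
open Polynomial

/-- Heat flow with explicit truncation. -/
noncomputable def hf (s : ℂ) (M : ℕ) (Q : Polynomial ℂ) : Polynomial ℂ :=
  ∑ k ∈ Finset.range M,
    ((-s / 2) ^ k / (Nat.factorial k : ℂ)) • (Polynomial.derivative^[2 * k] Q)

lemma hf_mono {s : ℂ} {Q : Polynomial ℂ} {M M' : ℕ} (h : Q.natDegree < M)
    (hMM : M ≤ M') : hf s M' Q = hf s M Q := by
  refine (Finset.sum_subset (Finset.range_subset_range.2 hMM) ?_).symm
  intro k hk hk2
  simp only [Finset.mem_range, not_lt] at hk2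
  have : Q.natDegree < 2 * k := by omega
  rw [Polynomial.iterate_derivative_eq_zero this, smul_zero]

lemma hf_congr {s : ℂ} {Q : Polynomial ℂ} {M M' : ℕ} (h : Q.natDegree < M)
    (h' : Q.natDegree < M') : hf s M Q = hf s M' Q := by
  rcases le_total M M' with hMM | hMM
  · exact (hf_mono h hMM).symm
  · exact hf_mono h' hMM

lemma iterate_derivative_add (m : ℕ) (P Q : Polynomial ℂ) :
    Polynomial.derivative^[m] (P + Q)
      = Polynomial.derivative^[m] P + Polynomial.derivative^[m] Q := by
  induction m generalizing P Q with
  | zero => simp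
  | succ m ih => rw [Function.iterate_succ_apply, Function.iterate_succ_apply,
      Function.iterate_succ_apply, derivative_add, ih]

lemma iterate_derivative_smul' (m : ℕ) (c : ℂ) (P : Polynomial ℂ) :
    Polynomial.derivative^[m] (c • P) = c • Polynomial.derivative^[m] P := by
  induction m generalizing P with
  | zero => simp
  | succ m ih => rw [Function.iterate_succ_apply, Function.iterate_succ_apply,
      derivative_smul, ih]

lemma hf_add (s : ℂ) (M : ℕ) (P Q : Polynomial ℂ) :
    hf s M (P + Q) = hf s M P + hf s M Q := by
  unfold hf
  rw [← Finset.sum_add_distrib]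
  refine Finset.sum_congr rfl fun k _ => ?_
  rw [iterate_derivative_add, smul_add]

lemma hf_smul (s : ℂ) (M : ℕ) (c : ℂ) (P : Polynomial ℂ) :
    hf s M (c • P) = c • hf s M P := by
  unfold hf
  rw [Finset.smul_sum]
  refine Finset.sum_congr rfl fun k _ => ?_
  rw [iterate_derivative_smul', smul_comm]

lemma hf_one (s : ℂ) (M : ℕ) (hM : 1 ≤ M) : hf s M (1 : Polynomial ℂ) = 1 := by
  have h0 : (1 : Polynomial ℂ).natDegree < 1 := by simp
  rw [hf_congr (by omega : (1:Polynomial ℂ).natDegree < M) h0]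
  unfold hf
  simp

lemma iterate_derivative_X_mul_s6 (m : ℕ) (Q : Polynomial ℂ) :
    Polynomial.derivative^[m] (X * Q)
      = X * Polynomial.derivative^[m] Q + (m : ℂ) • Polynomial.derivative^[m - 1] Q := by
  induction m generalizing Q with
  | zero => simp
  | succ m ih =>
    rw [Function.iterate_succ_apply', ih, derivative_add, derivative_smul, derivative_mul,
      derivative_X, one_mul]
    have e1 : Polynomial.derivative (Polynomial.derivative^[m] Q)
        = Polynomial.derivative^[m+1] Q := (Function.iterate_succ_apply' _ _ _).symm
    cases m with
    | zero => simp [e1, add_comm]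
    | succ k =>
      have e2 : Polynomial.derivative (Polynomial.derivative^[k+1-1] Q)
          = Polynomial.derivative^[k+1] Q := by
        show Polynomial.derivative (Polynomial.derivative^[k] Q) = _
        exact (Function.iterate_succ_apply' _ _ _).symm
      rw [e1, e2]
      have : ((k+1+1 : ℕ) : ℂ) = ((k+1 : ℕ) : ℂ) + 1 := by push_cast; ring
      rw [show (k+1+1 : ℕ) - 1 = k + 1 from rfl, this, add_smul, one_smul]
      abel

lemma hf_derivative (s : ℂ) (M : ℕ) (Q : Polynomial ℂ) :
    hf s M (Polynomial.derivative Q) = Polynomial.derivative (hf s M Q) := by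
  unfold hf
  rw [derivative_sum]
  refine Finset.sum_congr rfl fun k _ => ?_
  rw [derivative_smul]
  congr 1
  rw [← Function.iterate_succ_apply, Function.iterate_succ_apply']

lemma hf_X_mul (s : ℂ) (M : ℕ) (Q : Polynomial ℂ) :
    hf s (M+1) (X * Q) = X * hf s (M+1) Q - s • hf s M (Polynomial.derivative Q) := by
  have hkey : ∀ j : ℕ, ((-s / 2) ^ (j+1) / (((j+1).factorial : ℕ) : ℂ)) * ((2*(j+1) : ℕ) : ℂ)
      = -(s * ((-s / 2) ^ j / ((j.factorial : ℕ) : ℂ))) := by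
    intro j
    have h1 : (((j+1).factorial : ℕ) : ℂ) = ((j:ℂ)+1) * ((j.factorial : ℕ) : ℂ) := by
      rw [Nat.factorial_succ]; push_cast; ring
    have h2 : ((j.factorial : ℕ) : ℂ) ≠ 0 := by
      exact_mod_cast Nat.cast_ne_zero.2 (Nat.factorial_ne_zero j)
    have h3 : ((j:ℂ)+1) ≠ 0 := Nat.cast_add_one_ne_zero j
    rw [h1]
    push_cast
    field_simp
    ring
  unfold hf
  have expand : ∀ k ∈ Finset.range (M+1),
      ((-s / 2) ^ k / (Nat.factorial k : ℂ)) • (Polynomial.derivative^[2*k] (X * Q))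
      = X * (((-s / 2) ^ k / (Nat.factorial k : ℂ)) • (Polynomial.derivative^[2*k] Q))
        + (((-s / 2) ^ k / (Nat.factorial k : ℂ)) * ((2*k : ℕ) : ℂ)) •
            (Polynomial.derivative^[2*k - 1] Q) := by
    intro k _
    rw [iterate_derivative_X_mul_s6, smul_add, smul_smul, mul_smul_comm]
  rw [Finset.sum_congr rfl expand, Finset.sum_add_distrib, sub_eq_add_neg]
  congr 1
  · exact (Finset.mul_sum _ _ _).symm
  · rw [Finset.sum_range_succ']
    simp only [Nat.mul_zero, Nat.cast_zero, mul_zero, zero_smul, add_zero]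
    rw [Finset.smul_sum, ← Finset.sum_neg_distrib]
    refine Finset.sum_congr rfl fun j _ => ?_
    have hidx : 2*(j+1) - 1 = 2*j + 1 := by omega
    rw [hidx, smul_smul, hkey j, neg_smul, Function.iterate_succ_apply]

noncomputable def hpow (s : ℂ) (N m : ℕ) : Polynomial ℂ := hf s (N+1) (X^m)

lemma hpow_zero (s : ℂ) (N : ℕ) : hpow s N 0 = 1 := by
  unfold hpow
  rw [pow_zero]
  exact hf_one s (N+1) (by omega)

lemma hf_zero (s : ℂ) (M : ℕ) : hf s M (0 : Polynomial ℂ) = 0 := by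
  unfold hf
  refine Finset.sum_eq_zero fun k _ => ?_
  rw [Polynomial.iterate_derivative_zero, smul_zero]

lemma hpow_rec (s : ℂ) (N : ℕ) (m : ℕ) (hm : m ≤ N) :
    hpow s N (m+1) = X * hpow s N m - (s * (m:ℂ)) • hpow s N (m-1) := by
  unfold hpow
  rw [pow_succ', hf_X_mul]
  cases m with
  | zero =>
    simp [hf_zero]
  | succ k =>
    rw [derivative_X_pow, Nat.add_sub_cancel]
    have h1 : C ((k+1 : ℕ) : ℂ) * X ^ k = ((k+1 : ℕ) : ℂ) • (X ^ k : Polynomial ℂ) := by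
      rw [Polynomial.smul_eq_C_mul]
    rw [h1, hf_smul]
    have h2 : hf s N (X ^ k : Polynomial ℂ) = hf s (N+1) (X ^ k : Polynomial ℂ) := by
      refine hf_congr ?_ ?_ <;> rw [natDegree_X_pow] <;> omega
    rw [h2, smul_smul]

lemma hf_iterate_derivative (s : ℂ) (M : ℕ) (Q : Polynomial ℂ) (j : ℕ) :
    hf s M (Polynomial.derivative^[j] Q) = Polynomial.derivative^[j] (hf s M Q) := by
  induction j generalizing Q with
  | zero => rfl
  | succ j ih =>
    rw [Function.iterate_succ_apply, Function.iterate_succ_apply, ih, hf_derivative]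

lemma iterD_hpow (s : ℂ) (N : ℕ) (j : ℕ) (hj : j ≤ N) :
    Polynomial.derivative^[j] (hpow s N N)
      = ((N.descFactorial j : ℕ) : ℂ) • hpow s N (N - j) := by
  unfold hpow
  rw [← hf_iterate_derivative, Polynomial.iterate_derivative_X_pow_eq_smul]
  exact hf_smul _ _ _ _

lemma coeff_hpow_top (s : ℂ) (N : ℕ) : (hpow s N N).coeff N = 1 := by
  unfold hpow hf
  rw [Polynomial.finset_sum_coeff, Finset.sum_range_succ']
  have h0 : ((((-s / 2) ^ 0 / (Nat.factorial 0 : ℂ)) •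
      (Polynomial.derivative^[2*0] (X^N : Polynomial ℂ))).coeff N) = 1 := by
    simp
  rw [h0]
  have hz : ∀ k ∈ Finset.range N, ((((-s / 2) ^ (k+1) / (Nat.factorial (k+1) : ℂ)) •
      (Polynomial.derivative^[2*(k+1)] (X^N : Polynomial ℂ))).coeff N) = 0 := by
    intro k hk
    have hkN : k < N := Finset.mem_range.1 hk
    rw [Polynomial.coeff_smul]
    have hdeg : (Polynomial.derivative^[2*(k+1)] (X^N : Polynomial ℂ)).natDegree < N := by
      rcases lt_or_ge N (2*(k+1)) with h | h
      · rw [Polynomial.iterate_derivative_eq_zero]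
        · simp only [natDegree_zero]; omega
        · rw [natDegree_X_pow]; omega
      · calc (Polynomial.derivative^[2*(k+1)] (X^N : Polynomial ℂ)).natDegree
            ≤ (X^N : Polynomial ℂ).natDegree - 2*(k+1) := Polynomial.natDegree_iterate_derivative _ _
          _ < N := by rw [natDegree_X_pow]; omega
    rw [Polynomial.coeff_eq_zero_of_natDegree_lt hdeg, smul_zero]
  rw [Finset.sum_congr rfl hz]
  simp

lemma abs_sub_abs_le_abs_sub' (a b : ℂ) : ‖a‖ - ‖b‖ ≤ ‖a - b‖ := by
  have h := norm_add_le (a - b) b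
  simp only [sub_add_cancel] at h
  linarith

lemma hermite_growth (s₀ : ℝ) (hs₀ : 0 < s₀) (N : ℕ) (w : ℂ)
    (hw : 4*s₀*N ≤ ‖w‖^2) :
    ∀ m, m + 1 ≤ N → ‖w‖ / 2 * ‖(hpow (s₀:ℂ) N m).eval w‖
        ≤ ‖(hpow (s₀:ℂ) N (m+1)).eval w‖ := by
  have habs : ∀ m : ℕ, 0 ≤ ‖(hpow (s₀:ℂ) N m).eval w‖ :=
    fun m => norm_nonneg _
  intro m
  induction m with
  | zero =>
    intro h1
    have h := hpow_rec (s₀:ℂ) N 0 (by omega)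
    simp only [Nat.cast_zero, mul_zero, zero_smul, sub_zero, hpow_zero, mul_one] at h
    rw [h, Polynomial.eval_X, hpow_zero, Polynomial.eval_one, norm_one, mul_one]
    nlinarith [norm_nonneg w]
  | succ m ih =>
    intro h2
    have hIH := ih (by omega)
    have hwpos : 0 < ‖w‖ := by
      have hN : (1:ℝ) ≤ (N:ℝ) := by exact_mod_cast Nat.one_le_cast.2 (by omega : 1 ≤ N)
      nlinarith [norm_nonneg w]
    have hrec := hpow_rec (s₀:ℂ) N (m+1) (by omega)
    rw [Nat.add_sub_cancel] at hrec
    have heval : (hpow (s₀:ℂ) N (m+2)).eval w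
        = w * (hpow (s₀:ℂ) N (m+1)).eval w
          - ((s₀:ℂ) * ((m+1 : ℕ):ℂ)) * (hpow (s₀:ℂ) N m).eval w := by
      rw [show m+2 = (m+1)+1 from rfl, hrec]
      simp [Polynomial.eval_smul, smul_eq_mul]
    set Am := ‖(hpow (s₀:ℂ) N m).eval w‖
    set Am1 := ‖(hpow (s₀:ℂ) N (m+1)).eval w‖
    have htri : ‖w‖ * Am1 - s₀ * ((m+1:ℕ):ℝ) * Am
        ≤ ‖(hpow (s₀:ℂ) N (m+2)).eval w‖ := by
      rw [heval]
      have h3 := abs_sub_abs_le_abs_sub' (w * (hpow (s₀:ℂ) N (m+1)).eval w)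
        (((s₀:ℂ) * ((m+1 : ℕ):ℂ)) * (hpow (s₀:ℂ) N m).eval w)
      rw [norm_mul, norm_mul, norm_mul, Complex.norm_real, Real.norm_eq_abs, Complex.norm_natCast,
        abs_of_pos hs₀] at h3
      exact h3
    have hmN : ((m+1:ℕ):ℝ) ≤ (N:ℝ) := by exact_mod_cast Nat.cast_le.2 (by omega : m+1 ≤ N)
    have h4 : 4 * s₀ * ((m+1:ℕ):ℝ) ≤ ‖w‖ ^ 2 := by nlinarith
    nlinarith [habs m, habs (m+1), mul_le_mul_of_nonneg_left hIH (le_of_lt hs₀)]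

lemma hermite_lower (s₀ : ℝ) (hs₀ : 0 < s₀) (N : ℕ) (w : ℂ)
    (hw : 4*s₀*N ≤ ‖w‖^2) :
    ∀ m, m ≤ N → (‖w‖ / 2)^m ≤ ‖(hpow (s₀:ℂ) N m).eval w‖ := by
  intro m
  induction m with
  | zero => intro _; simp [hpow_zero]
  | succ m ih =>
    intro h
    have h1 := ih (by omega)
    have h2 := hermite_growth s₀ hs₀ N w hw m h
    have h3 : (0:ℝ) ≤ ‖w‖ / 2 := by positivity
    calc (‖w‖ / 2)^(m+1) = (‖w‖ / 2) * (‖w‖ / 2)^m := by ring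
      _ ≤ (‖w‖ / 2) * ‖(hpow (s₀:ℂ) N m).eval w‖ :=
          mul_le_mul_of_nonneg_left h1 h3
      _ ≤ _ := h2

lemma hermite_ne_zero (s₀ : ℝ) (hs₀ : 0 < s₀) (N : ℕ) (hN : 1 ≤ N) (w : ℂ)
    (hw : 4*s₀*N ≤ ‖w‖^2) : (hpow (s₀:ℂ) N N).eval w ≠ 0 := by
  have h1 := hermite_lower s₀ hs₀ N w hw N le_rfl
  have hwpos : 0 < ‖w‖ := by
    have hN' : (1:ℝ) ≤ (N:ℝ) := by exact_mod_cast Nat.one_le_cast.2 hN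
    nlinarith [norm_nonneg w]
  intro h
  rw [h, norm_zero] at h1
  have : (0:ℝ) < (‖w‖ / 2)^N := by positivity
  linarith

noncomputable def Pair (n : ℕ) (p q : Polynomial ℂ) : ℂ :=
  ∑ m ∈ Finset.range (n+1),
    (-1)^m * (m.factorial : ℂ) * ((n-m).factorial : ℂ) * p.coeff m * q.coeff (n-m)

lemma pair_step (n : ℕ) (a : ℂ) (p₁ q : Polynomial ℂ) (hp₁ : p₁.natDegree ≤ n) :
    Pair (n+1) ((X - C a) * p₁) q
      = - Pair n p₁ (C ((n:ℂ)+1) * q + (C a - X) * Polynomial.derivative q) := by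
  set q₁ := C ((n:ℂ)+1) * q + (C a - X) * Polynomial.derivative q with hq₁def
  have hq₁ : ∀ k, q₁.coeff k
      = ((n:ℂ)+1-(k:ℂ)) * q.coeff k + a * ((k:ℂ)+1) * q.coeff (k+1) := by
    intro k
    rw [hq₁def, coeff_add, coeff_C_mul, sub_mul, coeff_sub, coeff_C_mul, coeff_derivative]
    cases k with
    | zero =>
      rw [Polynomial.mul_coeff_zero, coeff_X_zero, coeff_derivative]
      push_cast; ring
    | succ j =>
      rw [Polynomial.coeff_X_mul, coeff_derivative]
      push_cast; ring
  set T1 : ℂ := ∑ j ∈ Finset.range (n+1),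
    (-1)^j * (j.factorial : ℂ) * ((n-j).factorial : ℂ) * ((j:ℂ)+1)
      * p₁.coeff j * q.coeff (n-j) with hT1
  set T2 : ℂ := ∑ m ∈ Finset.range (n+1),
    (-1)^m * (m.factorial : ℂ) * ((n-m).factorial : ℂ) * ((((n-m):ℕ):ℂ)+1)
      * p₁.coeff m * q.coeff ((n-m)+1) with hT2
  have hRHS : - Pair n p₁ q₁ = -(T1 + a * T2) := by
    unfold Pair
    rw [hT1, hT2, Finset.mul_sum, ← Finset.sum_add_distrib]
    congr 1
    refine Finset.sum_congr rfl fun m hm => ?_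
    have hmn : m ≤ n := Nat.lt_succ_iff.1 (Finset.mem_range.1 hm)
    rw [hq₁ (n-m)]
    have hcast : ((n-m : ℕ):ℂ) = (n:ℂ) - (m:ℂ) := by
      have : m ≤ n := Nat.lt_succ_iff.1 (Finset.mem_range.1 hm)
      push_cast [this]; ring
    rw [hcast]
    ring
  have hLHS : Pair (n+1) ((X - C a) * p₁) q = -T1 - a * T2 := by
    unfold Pair
    have step1 : ∑ m ∈ Finset.range (n+1+1),
        (-1)^m * (m.factorial : ℂ) * (((n+1)-m).factorial : ℂ)
          * ((X - C a) * p₁).coeff m * q.coeff ((n+1)-m)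
        = (∑ m ∈ Finset.range (n+2),
            (-1)^m * (m.factorial : ℂ) * (((n+1)-m).factorial : ℂ)
              * (X*p₁).coeff m * q.coeff ((n+1)-m))
          - a * ∑ m ∈ Finset.range (n+2),
            (-1)^m * (m.factorial : ℂ) * (((n+1)-m).factorial : ℂ)
              * p₁.coeff m * q.coeff ((n+1)-m) := by
      rw [Finset.mul_sum, ← Finset.sum_sub_distrib]
      refine Finset.sum_congr rfl fun m _ => ?_
      rw [sub_mul, coeff_sub, coeff_C_mul]
      ring
    rw [step1]
    have step2 : ∑ m ∈ Finset.range (n+2),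
        (-1)^m * (m.factorial : ℂ) * (((n+1)-m).factorial : ℂ)
          * (X*p₁).coeff m * q.coeff ((n+1)-m) = -T1 := by
      rw [Finset.sum_range_succ', hT1]
      have h0 : (-1:ℂ)^0 * ((0:ℕ).factorial : ℂ) * (((n+1)-0).factorial : ℂ)
          * (X*p₁).coeff 0 * q.coeff ((n+1)-0) = 0 := by
        rw [Polynomial.mul_coeff_zero, coeff_X_zero]
        ring
      rw [h0, add_zero, ← Finset.sum_neg_distrib]
      refine Finset.sum_congr rfl fun j hj => ?_
      rw [Polynomial.coeff_X_mul]
      have e1 : (n+1) - (j+1) = n - j := by omega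
      rw [e1]
      have e2 : ((j+1).factorial : ℂ) = ((j:ℂ)+1) * (j.factorial : ℂ) := by
        rw [Nat.factorial_succ]; push_cast; ring
      rw [e2]
      push_cast
      ring
    rw [step2]
    have step3 : ∑ m ∈ Finset.range (n+2),
        (-1)^m * (m.factorial : ℂ) * (((n+1)-m).factorial : ℂ)
          * p₁.coeff m * q.coeff ((n+1)-m) = T2 := by
      rw [Finset.sum_range_succ]
      have hlast : p₁.coeff (n+1) = 0 :=
        Polynomial.coeff_eq_zero_of_natDegree_lt (by omega)
      rw [hlast]
      rw [hT2]
      have : (-1:ℂ)^(n+1) * ((n+1).factorial : ℂ) * (((n+1)-(n+1)).factorial : ℂ) * 0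
          * q.coeff ((n+1)-(n+1)) = 0 := by ring
      rw [this, add_zero]
      refine Finset.sum_congr rfl fun m hm => ?_
      have hmn : m ≤ n := Nat.lt_succ_iff.1 (Finset.mem_range.1 hm)
      have e1 : (n+1) - m = (n-m) + 1 := by omega
      rw [e1]
      have e2 : (((n-m)+1).factorial : ℂ) = ((((n-m):ℕ):ℂ)+1) * (((n-m)).factorial : ℂ) := by
        rw [Nat.factorial_succ]; push_cast; ring
      rw [e2]
      ring
    rw [step3]
  rw [hLHS, hRHS]
  ring

lemma coeff_polar (n : ℕ) (aa : ℂ) (q : Polynomial ℂ) (k : ℕ) :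
    (C ((n:ℂ)+1) * q + (C aa - X) * Polynomial.derivative q).coeff k
      = ((n:ℂ)+1-(k:ℂ)) * q.coeff k + aa * ((k:ℂ)+1) * q.coeff (k+1) := by
  rw [coeff_add, coeff_C_mul, sub_mul, coeff_sub, coeff_C_mul, coeff_derivative]
  cases k with
  | zero =>
    rw [Polynomial.mul_coeff_zero, coeff_X_zero, coeff_derivative]
    push_cast; ring
  | succ j =>
    rw [Polynomial.coeff_X_mul, coeff_derivative]
    push_cast; ring

lemma natDegree_polar_le (n : ℕ) (aa : ℂ) (q : Polynomial ℂ) (hq : q.natDegree ≤ n+1) :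
    (C ((n:ℂ)+1) * q + (C aa - X) * Polynomial.derivative q).natDegree ≤ n := by
  rw [Polynomial.natDegree_le_iff_coeff_eq_zero]
  intro N hN
  rw [coeff_polar]
  have h1 : q.coeff (N+1) = 0 := Polynomial.coeff_eq_zero_of_natDegree_lt (by omega)
  rcases Nat.lt_or_ge (q.natDegree) N with h | h
  · rw [Polynomial.coeff_eq_zero_of_natDegree_lt h, h1]; ring
  · have hNn1 : N = n+1 := by omega
    subst hNn1
    rw [h1]
    have : ((n:ℂ)+1-((n+1:ℕ):ℂ)) = 0 := by push_cast; ring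
    rw [this]
    ring

lemma deriv_ratio (w : ℂ) (S : Multiset ℂ) (hS : ∀ y ∈ S, w ≠ y) :
    Polynomial.eval w (Polynomial.derivative (S.map (fun y => X - C y)).prod)
      = Polynomial.eval w ((S.map (fun y => X - C y)).prod)
        * (S.map (fun y => (w - y)⁻¹)).sum := by
  induction S using Multiset.induction_on with
  | empty => simp
  | cons a S ih =>
    have hwa : w ≠ a := hS a (Multiset.mem_cons_self a S)
    have hS' : ∀ y ∈ S, w ≠ y := fun y hy => hS y (Multiset.mem_cons_of_mem hy)
    rw [Multiset.map_cons, Multiset.prod_cons, derivative_mul, Multiset.map_cons,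
      Multiset.sum_cons]
    rw [Polynomial.eval_add, Polynomial.eval_mul, Polynomial.eval_mul, eval_sub, eval_X,
      eval_C, Polynomial.eval_mul, eval_sub, eval_X, eval_C, ih hS']
    rw [derivative_sub, derivative_X, derivative_C, sub_zero, Polynomial.eval_one]
    have hne : w - a ≠ 0 := sub_ne_zero.2 hwa
    field_simp

lemma sq_abs_expand (z : ℂ) : (‖z‖)^2 = z.re*z.re + z.im*z.im := by
  rw [Complex.sq_norm, Complex.normSq_apply]

lemma le_of_sq_le_sq' {x y : ℝ} (hx : 0 ≤ x) (hy : 0 ≤ y) (h : x^2 ≤ y^2) : x ≤ y := by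
  nlinarith

lemma core_disk_mem (e v : ℂ) (R : ℝ) (hR : 0 ≤ R) (hb : 0 ≤ R^2 - (‖e‖)^2)
    (h : R ≤ ‖e - v‖) :
    ‖((R^2 - (‖e‖)^2 : ℝ) : ℂ) + (starRingEnd ℂ) e * v‖
      ≤ R * ‖v‖ := by
  have h2 : R^2 ≤ (‖e - v‖)^2 := by nlinarith [norm_nonneg (e - v)]
  refine le_of_sq_le_sq' (norm_nonneg _) (mul_nonneg hR (norm_nonneg v)) ?_
  rw [mul_pow, sq_abs_expand, sq_abs_expand]
  rw [sq_abs_expand] at h2 hb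
  simp only [Complex.add_re, Complex.add_im, Complex.mul_re, Complex.mul_im,
    Complex.conj_re, Complex.conj_im, Complex.ofReal_re, Complex.ofReal_im,
    Complex.sub_re, Complex.sub_im, Complex.sq_norm, Complex.normSq_apply] at h2 ⊢
  set a1 := e.re; set a2 := e.im; set b1 := v.re; set b2 := v.im
  have key : 0 ≤ (b1*b1+b2*b2) - (R^2 - (a1*a1+a2*a2)) - 2*(a1*b1+a2*b2) := by nlinarith
  nlinarith [mul_nonneg hb key]

lemma core_disk_kappa (e δ : ℂ) (R : ℝ) (hb : 0 < R^2 - (‖e‖)^2)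
    (h : ‖e + δ‖ < R) :
    ‖δ‖ * R < ‖((R^2 - (‖e‖)^2 : ℝ) : ℂ)
      - δ * (starRingEnd ℂ) e‖ := by
  have hR : 0 ≤ R := le_trans (norm_nonneg _) h.le
  have h2 : (‖e + δ‖)^2 < R^2 := by nlinarith [norm_nonneg (e + δ)]
  have hsq : (‖δ‖ * R)^2 < (‖((R^2 - (‖e‖)^2 : ℝ) : ℂ)
      - δ * (starRingEnd ℂ) e‖)^2 := by
    rw [mul_pow, sq_abs_expand, sq_abs_expand]
    rw [sq_abs_expand] at h2 hb
    simp only [Complex.add_re, Complex.add_im, Complex.mul_re, Complex.mul_im,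
      Complex.conj_re, Complex.conj_im, Complex.ofReal_re, Complex.ofReal_im,
      Complex.sub_re, Complex.sub_im, Complex.sq_norm, Complex.normSq_apply] at h2 ⊢
    set a1 := e.re; set a2 := e.im; set d1 := δ.re; set d2 := δ.im
    have key : 0 < (R^2 - (a1*a1+a2*a2)) - 2*(a1*d1+a2*d2) - (d1*d1+d2*d2) := by nlinarith
    nlinarith [mul_pos hb key]
  have h3 := norm_nonneg (((R^2 - (‖e‖)^2 : ℝ) : ℂ) - δ * (starRingEnd ℂ) e)
  nlinarith [mul_nonneg (norm_nonneg δ) hR]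


lemma grace : ∀ (n : ℕ) (p q : Polynomial ℂ) (c : ℂ) (r R : ℝ), 0 ≤ r → r < R →
    p ≠ 0 → p.natDegree = n → (∀ x ∈ p.roots, ‖x - c‖ ≤ r) →
    q.natDegree ≤ n → Pair n p q = 0 →
    ∃ w, ‖w - c‖ < R ∧ q.eval w = 0 := by
  intro n
  induction n with
  | zero =>
    intro p q c r R hr hrR hp0 hpd hproots hqd hpair
    refine ⟨c, by simpa using lt_of_le_of_lt hr hrR, ?_⟩
    have hp : p.coeff 0 ≠ 0 := by
      intro h
      apply hp0
      rw [Polynomial.eq_C_of_natDegree_eq_zero hpd, h, map_zero]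
    have hq0 : q.coeff 0 = 0 := by
      unfold Pair at hpair
      simp at hpair
      rcases hpair with h | h
      · exact absurd h hp
      · exact h
    rw [Polynomial.eq_C_of_natDegree_eq_zero (Nat.le_zero.1 hqd), hq0, map_zero, eval_zero]
  | succ n ih =>
    intro p q c r R hr hrR hp0 hpd hproots hqd hpair
    by_contra hcon
    push_neg at hcon
    have hR : 0 < R := lt_of_le_of_lt hr hrR
    -- obtain a root of p
    have hdeg : 0 < p.degree := Polynomial.natDegree_pos_iff_degree_pos.1 (by omega)
    obtain ⟨aa, ha⟩ := Complex.exists_root hdeg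
    have haroot : aa ∈ p.roots := by
      rw [Polynomial.mem_roots hp0]
      exact ha
    have haa : ‖aa - c‖ ≤ r := hproots aa haroot
    obtain ⟨p₁, hp₁⟩ := Polynomial.dvd_iff_isRoot.2 ha
    have hp₁0 : p₁ ≠ 0 := by
      intro h
      rw [h, mul_zero] at hp₁
      exact hp0 hp₁
    have hdegp₁ : p₁.natDegree = n := by
      have h2 := hpd
      rw [hp₁, Polynomial.natDegree_mul (Polynomial.X_sub_C_ne_zero aa) hp₁0,
        natDegree_X_sub_C] at h2
      omega
    set q₁ := C ((n:ℂ)+1) * q + (C aa - X) * Polynomial.derivative q with hq₁def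
    have hq₁d : q₁.natDegree ≤ n := natDegree_polar_le n aa q hqd
    have hpair₁ : Pair n p₁ q₁ = 0 := by
      have hstep := pair_step n aa p₁ q (le_of_eq hdegp₁)
      rw [← hp₁, hpair] at hstep
      exact neg_eq_zero.1 hstep.symm
    have hproots₁ : ∀ x ∈ p₁.roots, ‖x - c‖ ≤ r := by
      intro x hx
      apply hproots
      have hdvd : p₁ ∣ p := ⟨X - C aa, by rw [hp₁]; ring⟩
      exact Multiset.mem_of_le (Polynomial.roots.le_of_dvd hp0 hdvd) hx
    obtain ⟨w0, hw0R, hw0root⟩ := ih p₁ q₁ c r R hr hrR hp₁0 hdegp₁ hproots₁ hq₁d hpair₁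
    have hqw0 : q.eval w0 ≠ 0 := hcon w0 hw0R
    have hq0 : q ≠ 0 := by
      intro h
      apply hqw0
      rw [h, eval_zero]
    have hqroots : ∀ y ∈ q.roots, R ≤ ‖y - c‖ := by
      intro y hy
      by_contra hlt
      push_neg at hlt
      exact hcon y hlt (Polynomial.isRoot_of_mem_roots hy)
    set S := q.roots with hSdef
    set dd := Multiset.card S with hdd
    have hdn : dd ≤ n + 1 := le_trans (Polynomial.card_roots' q) hqd
    have hSne : ∀ y ∈ S, w0 - y ≠ 0 := by
      intro y hy
      have h1 := hqroots y hy
      intro h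
      have h2 : w0 = y := sub_eq_zero.1 h
      rw [h2] at hw0R
      linarith
    -- evaluation of q₁ at w0
    have heval : ((n:ℂ)+1) * q.eval w0 + (aa - w0) * (Polynomial.derivative q).eval w0 = 0 := by
      have h3 : q₁.eval w0 = 0 := hw0root
      rw [hq₁def] at h3
      simp only [Polynomial.eval_add, Polynomial.eval_mul, Polynomial.eval_sub,
        Polynomial.eval_C, Polynomial.eval_X] at h3
      linear_combination h3
    -- logarithmic derivative
    have hsplit := Polynomial.Splits.eq_prod_roots (IsAlgClosed.splits q)
    have hne : ∀ y ∈ S, w0 ≠ y := fun y hy h => hSne y hy (by rw [h]; ring)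
    have hratio := deriv_ratio w0 S hne
    have hderiv : (Polynomial.derivative q).eval w0
        = q.eval w0 * (S.map (fun y => (w0 - y)⁻¹)).sum := by
      have e2 : q.eval w0 = q.leadingCoeff * Polynomial.eval w0 ((S.map (fun y => X - C y)).prod) := by
        conv_lhs => rw [hsplit]
        rw [Polynomial.eval_mul, Polynomial.eval_C]
      conv_lhs => rw [hsplit]
      rw [Polynomial.derivative_C_mul, Polynomial.eval_mul, Polynomial.eval_C, hratio, e2]
      ring
    have hbr : ((n:ℂ)+1) + (aa - w0) * (S.map (fun y => (w0 - y)⁻¹)).sum = 0 := by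
      have h4 : q.eval w0 * (((n:ℂ)+1) + (aa - w0) * (S.map (fun y => (w0 - y)⁻¹)).sum) = 0 := by
        rw [hderiv] at heval
        linear_combination heval
      exact (mul_eq_zero.1 h4).resolve_left hqw0
    -- rewrite bracket via psi
    set ψ : ℂ → ℂ := fun y => (aa - y)/(w0 - y) with hψ
    have hmapc : ∀ y ∈ S, (aa - w0) * (w0 - y)⁻¹ = ψ y - 1 := by
      intro y hy
      have hv := hSne y hy
      rw [hψ]
      field_simp
      ring
    have hsum1 : (aa - w0) * (S.map (fun y => (w0 - y)⁻¹)).sum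
        = (S.map ψ).sum - (dd:ℂ) := by
      rw [← Multiset.sum_map_mul_left]
      have : (S.map (fun y => (aa - w0) * (w0 - y)⁻¹)) = S.map (fun y => ψ y - 1) :=
        Multiset.map_congr rfl hmapc
      rw [this, Multiset.sum_map_sub]
      simp [hdd]
    have hbr2 : (S.map ψ).sum = (dd:ℂ) - ((n:ℂ)+1) := by
      rw [hsum1] at hbr
      linear_combination hbr
    -- geometry
    set ee := w0 - c with hee
    set β := R^2 - (‖ee‖)^2 with hβ
    have hβpos : 0 < β := by
      rw [hβ]
      nlinarith [norm_nonneg ee]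
    set δ := aa - w0 with hδ
    set κ := 1 - δ * (starRingEnd ℂ) ee / (β:ℂ) with hκ
    set ρ := ‖δ‖ * R / β with hρ
    have hρnn : 0 ≤ ρ := by
      rw [hρ]
      positivity
    have fact1 : ∀ y ∈ S, ‖ψ y - κ‖ ≤ ρ := by
      intro y hy
      have hv := hSne y hy
      set v := w0 - y with hv'
      have hid : ψ y - κ = δ * ((β:ℂ) + (starRingEnd ℂ) ee * v) / ((β:ℂ) * v) := by
        rw [hψ, hκ]
        have hβ0 : (β:ℂ) ≠ 0 := by exact_mod_cast ne_of_gt hβpos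
        have hv2 : w0 - y ≠ 0 := hv
        rw [hv']
        field_simp
        ring
      rw [hid, norm_div, norm_mul, norm_mul, Complex.norm_real, Real.norm_eq_abs, abs_of_pos hβpos]
      have hcore : ‖(β:ℂ) + (starRingEnd ℂ) ee * v‖ ≤ R * ‖v‖ := by
        have hyc : R ≤ ‖ee - v‖ := by
          have : ee - v = y - c := by rw [hee, hv']; ring
          rw [this]
          exact hqroots y hy
        have := core_disk_mem ee v R (le_of_lt hR) (le_of_lt hβpos) hyc
        rw [hβ]
        exact this
      have hvpos : 0 < ‖v‖ := by
        simpa using norm_pos_iff.2 hv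
      rw [hρ]
      rw [div_le_div_iff₀ (by positivity) hβpos]
      calc ‖δ‖ * ‖(β:ℂ) + (starRingEnd ℂ) ee * v‖ * β
          ≤ ‖δ‖ * (R * ‖v‖) * β := by
            exact mul_le_mul_of_nonneg_right
              (mul_le_mul_of_nonneg_left hcore (norm_nonneg δ)) hβpos.le
        _ = ‖δ‖ * R * (β * ‖v‖) := by ring
    have fact2 : ‖1 - κ‖ ≤ ρ := by
      have hid : 1 - κ = δ * (starRingEnd ℂ) ee / (β:ℂ) := by rw [hκ]; ring
      rw [hid, norm_div, norm_mul, Complex.norm_real, Real.norm_eq_abs, abs_of_pos hβpos, Complex.norm_conj, hρ]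
      have hele : ‖ee‖ ≤ R := le_of_lt hw0R
      gcongr
    have fact3 : ρ < ‖κ‖ := by
      have hid : κ = ((β:ℂ) - δ * (starRingEnd ℂ) ee) / (β:ℂ) := by
        rw [hκ]
        have hβ0 : (β:ℂ) ≠ 0 := by exact_mod_cast ne_of_gt hβpos
        field_simp
      have hcore := core_disk_kappa ee δ R hβpos (by
        have : ee + δ = aa - c := by rw [hee, hδ]; ring
        rw [this]
        exact lt_of_le_of_lt haa hrR)
      rw [hid, norm_div, Complex.norm_real, Real.norm_eq_abs, abs_of_pos hβpos, hρ]
      rw [div_lt_div_iff₀ hβpos hβpos]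
      have : ‖(β:ℂ) - δ * (starRingEnd ℂ) ee‖
          = ‖((R^2 - (‖ee‖)^2 : ℝ):ℂ) - δ * (starRingEnd ℂ) ee‖ := by
        rw [hβ]
      rw [this]
      exact mul_lt_mul_of_pos_right hcore hβpos
    -- final contradiction
    have hsum2 : ‖(S.map ψ).sum - (dd:ℂ)*κ‖ ≤ (dd:ℝ)*ρ := by
      have hid : (S.map ψ).sum - (dd:ℂ)*κ = (S.map (fun y => ψ y - κ)).sum := by
        rw [Multiset.sum_map_sub]
        congr 1
        simp [hdd]
      rw [hid]
      calc ‖(S.map (fun y => ψ y - κ)).sum‖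
          ≤ ((S.map (fun y => ψ y - κ)).map norm).sum := norm_multiset_sum_le _
        _ ≤ (Multiset.card ((S.map (fun y => ψ y - κ)).map norm)) • ρ := by
            refine Multiset.sum_le_card_nsmul _ _ ?_
            intro x hx
            rw [Multiset.mem_map] at hx
            obtain ⟨z, hz, hzx⟩ := hx
            rw [Multiset.mem_map] at hz
            obtain ⟨y, hy, hyz⟩ := hz
            rw [← hzx, ← hyz]
            exact fact1 y hy
        _ = (dd:ℝ)*ρ := by
            rw [Multiset.card_map, Multiset.card_map, ← hdd, nsmul_eq_mul]
    have hmain : -(((n:ℂ)+1) * κ) = (((n:ℂ)+1) - (dd:ℂ))*(1-κ) + ((S.map ψ).sum - (dd:ℂ)*κ) := by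
      rw [hbr2]
      ring
    have habs1 : ((n:ℝ)+1) * ‖κ‖ ≤ (((n:ℝ)+1) - (dd:ℝ))*ρ + (dd:ℝ)*ρ := by
      have h5 : ‖-(((n:ℂ)+1) * κ)‖ = ((n:ℝ)+1) * ‖κ‖ := by
        rw [norm_neg, norm_mul]
        congr 1
        have : ((n:ℂ)+1) = ((n+1:ℕ):ℂ) := by push_cast; ring
        rw [this, Complex.norm_natCast]
        push_cast; ring
      have h6 : ‖(((n:ℂ)+1) - (dd:ℂ))*(1-κ)‖ ≤ (((n:ℝ)+1) - (dd:ℝ))*ρ := by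
        rw [norm_mul]
        have h7 : ‖((n:ℂ)+1) - (dd:ℂ)‖ = ((n:ℝ)+1) - (dd:ℝ) := by
          have : ((n:ℂ)+1) - (dd:ℂ) = (((n+1-dd:ℕ)):ℂ) := by
            push_cast [Nat.cast_sub hdn]
            ring
          rw [this, Complex.norm_natCast]
          push_cast [Nat.cast_sub hdn]
          ring
        rw [h7]
        have h8 : (0:ℝ) ≤ ((n:ℝ)+1) - (dd:ℝ) := by
          have : (dd:ℝ) ≤ (n:ℝ)+1 := by exact_mod_cast hdn
          linarith
        exact mul_le_mul_of_nonneg_left fact2 h8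
      calc ((n:ℝ)+1) * ‖κ‖ = ‖-(((n:ℂ)+1) * κ)‖ := h5.symm
        _ = ‖(((n:ℂ)+1) - (dd:ℂ))*(1-κ) + ((S.map ψ).sum - (dd:ℂ)*κ)‖ := by rw [hmain]
        _ ≤ ‖(((n:ℂ)+1) - (dd:ℂ))*(1-κ)‖ + ‖(S.map ψ).sum - (dd:ℂ)*κ‖ :=
            norm_add_le _ _
        _ ≤ (((n:ℝ)+1) - (dd:ℝ))*ρ + (dd:ℝ)*ρ := add_le_add h6 hsum2
    have hfin : ((n:ℝ)+1) * ‖κ‖ ≤ ((n:ℝ)+1) * ρ := by linarith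
    have hn1 : (0:ℝ) < (n:ℝ)+1 := by positivity
    have := mul_lt_mul_of_pos_left fact3 hn1
    linarith

lemma coeff_comp_negX (g : Polynomial ℂ) (m : ℕ) :
    (g.comp (-X)).coeff m = (-1)^m * g.coeff m := by
  rw [Polynomial.comp, Polynomial.eval₂_eq_sum_range]
  rw [Polynomial.finset_sum_coeff]
  have hterm : ∀ i, (C (g.coeff i) * (-X)^i).coeff m
      = (if i = m then (-1)^m * g.coeff m else 0) := by
    intro i
    have : (-X : Polynomial ℂ)^i = C ((-1)^i) * X^i := by
      rw [neg_pow]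
      congr 1
      · rw [map_pow, map_neg, map_one]
    rcases eq_or_ne i m with h | h
    · subst h
      rw [this]
      simp only [Polynomial.coeff_C_mul, Polynomial.coeff_X_pow, if_pos rfl, if_true,
        mul_one]
      ring
    · rw [this]
      simp only [Polynomial.coeff_C_mul, Polynomial.coeff_X_pow, if_neg (Ne.symm h), if_neg h]
      ring
  rw [Finset.sum_congr rfl (fun i _ => hterm i)]
  rw [Finset.sum_ite_eq' (Finset.range (g.natDegree + 1)) m]
  split_ifs with h
  · rfl
  · rw [Finset.mem_range, not_lt] at h
    rw [Polynomial.coeff_eq_zero_of_natDegree_lt (by omega)]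
    ring

lemma comp_sub_eq (f : Polynomial ℂ) (z : ℂ) :
    f.comp (C z - X) = ((Polynomial.taylor z) f).comp (-X) := by
  rw [Polynomial.taylor_apply, Polynomial.comp_assoc]
  congr 1
  rw [Polynomial.add_comp, Polynomial.X_comp, Polynomial.C_comp]
  ring

lemma coeff_comp_sub (f : Polynomial ℂ) (z : ℂ) (m : ℕ) :
    (f.comp (C z - X)).coeff m = (-1)^m * (Polynomial.eval z ((Polynomial.hasseDeriv m) f)) := by
  rw [comp_sub_eq, coeff_comp_negX, Polynomial.taylor_coeff]

lemma factorial_coeff_comp_sub (f : Polynomial ℂ) (z : ℂ) (m : ℕ) :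
    ((m.factorial : ℕ) : ℂ) * (f.comp (C z - X)).coeff m
      = (-1)^m * Polynomial.eval z (Polynomial.derivative^[m] f) := by
  rw [coeff_comp_sub]
  have h1 : Polynomial.derivative^[m] f = m.factorial • (Polynomial.hasseDeriv m) f := by
    rw [← Polynomial.factorial_smul_hasseDeriv]
    rfl
  rw [h1]
  rw [Polynomial.eval_smul, nsmul_eq_mul]
  push_cast
  ring

lemma key_mono (s z : ℂ) (N k : ℕ) (hk : k ≤ N) :
    Pair N ((hpow s N N).comp (C z - X)) (X^k)
      = ((N.factorial : ℕ) : ℂ) * (hpow s N k).eval z := by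
  unfold Pair
  set pz := (hpow s N N).comp (C z - X) with hpz
  have hterm : ∀ m ∈ Finset.range (N+1), (-1)^m * (m.factorial : ℂ) * ((N-m).factorial : ℂ)
      * pz.coeff m * (X^k : Polynomial ℂ).coeff (N-m)
      = (if m = N - k then (-1)^m * (m.factorial : ℂ) * ((N-m).factorial : ℂ) * pz.coeff m else 0) := by
    intro m hm
    have hmN : m ≤ N := Nat.lt_succ_iff.1 (Finset.mem_range.1 hm)
    rw [Polynomial.coeff_X_pow]
    split_ifs with h1 h2 h2
    · ring
    · omega
    · omega
    · ring
  rw [Finset.sum_congr rfl hterm, Finset.sum_ite_eq' (Finset.range (N+1)) (N-k)]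
  have hmem : N - k ∈ Finset.range (N+1) := Finset.mem_range.2 (by omega)
  rw [if_pos hmem]
  have e1 : ((N - (N-k)) : ℕ) = k := by omega
  rw [e1]
  have e2 : ((k.factorial : ℕ) : ℂ) * pz.coeff (N-k) * ((N-k).factorial : ℂ)
      = (((N-k).factorial : ℕ):ℂ) * (((N-k).factorial : ℕ):ℂ)⁻¹
        * ((k.factorial : ℕ) : ℂ) * (((N-k).factorial : ℕ):ℂ) * pz.coeff (N-k) := by
    have : (((N-k).factorial : ℕ):ℂ) ≠ 0 := by
      exact_mod_cast Nat.cast_ne_zero.2 (Nat.factorial_ne_zero _)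
    field_simp
  have e3 := factorial_coeff_comp_sub (hpow s N N) z (N-k)
  have e4 : Polynomial.derivative^[N-k] (hpow s N N)
      = ((N.descFactorial (N-k) : ℕ) : ℂ) • hpow s N k := by
    rw [iterD_hpow s N (N-k) (by omega), e1]
  have e5 : Polynomial.eval z (Polynomial.derivative^[N-k] (hpow s N N))
      = ((N.descFactorial (N-k) : ℕ) : ℂ) * (hpow s N k).eval z := by
    rw [e4, Polynomial.eval_smul, smul_eq_mul]
  have e6 : ((k.factorial : ℕ):ℂ) * (((N.descFactorial (N-k)) : ℕ) : ℂ)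
      = ((N.factorial : ℕ) : ℂ) := by
    rw [← Nat.cast_mul]
    congr 1
    have := Nat.factorial_mul_descFactorial (show N - k ≤ N by omega)
    rw [e1] at this
    exact this
  -- combine
  have hsign : ((-1:ℂ)^(N-k)) * ((-1:ℂ)^(N-k)) = 1 := by
    rw [← pow_add]
    exact Even.neg_one_pow (Even.add_self _)
  calc (-1)^(N-k) * ((N-k).factorial : ℂ) * ((k).factorial : ℂ) * pz.coeff (N-k)
      = (-1)^(N-k) * ((k).factorial : ℂ) * ((((N-k).factorial : ℕ):ℂ) * pz.coeff (N-k)) := by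
        push_cast; ring
    _ = (-1)^(N-k) * ((k).factorial : ℂ) * ((-1)^(N-k) * Polynomial.eval z (Polynomial.derivative^[N-k] (hpow s N N))) := by
        rw [e3]
    _ = (((-1:ℂ)^(N-k)) * ((-1:ℂ)^(N-k))) * ((k).factorial : ℂ) * (((N.descFactorial (N-k) : ℕ) : ℂ) * (hpow s N k).eval z) := by
        rw [e5]; ring
    _ = ((N.factorial : ℕ) : ℂ) * (hpow s N k).eval z := by
        rw [hsign, ← e6]; push_cast; ring

lemma Pair_q_add (n : ℕ) (p q1 q2 : Polynomial ℂ) :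
    Pair n p (q1 + q2) = Pair n p q1 + Pair n p q2 := by
  unfold Pair
  rw [← Finset.sum_add_distrib]
  refine Finset.sum_congr rfl fun m _ => ?_
  rw [Polynomial.coeff_add]
  ring

lemma Pair_q_smul (n : ℕ) (p q : Polynomial ℂ) (c : ℂ) :
    Pair n p (C c * q) = c * Pair n p q := by
  unfold Pair
  rw [Finset.mul_sum]
  refine Finset.sum_congr rfl fun m _ => ?_
  rw [Polynomial.coeff_C_mul]
  ring

lemma Pair_q_sum {ι : Type*} (n : ℕ) (p : Polynomial ℂ) (s : Finset ι) (f : ι → Polynomial ℂ) :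
    Pair n p (∑ i ∈ s, f i) = ∑ i ∈ s, Pair n p (f i) := by
  unfold Pair
  rw [Finset.sum_comm]
  refine Finset.sum_congr rfl fun m _ => ?_
  rw [Polynomial.finset_sum_coeff, Finset.mul_sum]

lemma key_identity (s z : ℂ) (N : ℕ) (Q : Polynomial ℂ) (hQ : Q.natDegree ≤ N) :
    Pair N ((hpow s N N).comp (C z - X)) Q
      = ((N.factorial : ℕ) : ℂ) * (hf s (N+1) Q).eval z := by
  have hrep := Polynomial.as_sum_range' Q (N+1) (by omega)
  set Gfun : Polynomial ℂ → ℂ := fun Q => Polynomial.eval z (hf s (N+1) Q) with hGfun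
  have hadd : ∀ a b : Polynomial ℂ, Gfun (a+b) = Gfun a + Gfun b := by
    intro a b
    rw [hGfun]
    simp only [hf_add, Polynomial.eval_add]
  let Ghom : Polynomial ℂ →+ ℂ := AddMonoidHom.mk' Gfun hadd
  have hG : ∀ Q : Polynomial ℂ, (hf s (N+1) Q).eval z = Ghom Q := fun _ => rfl
  conv_lhs => rw [hrep]
  conv_rhs => rw [hrep, hG, map_sum]
  rw [Pair_q_sum, Finset.mul_sum]
  refine Finset.sum_congr rfl fun i hi => ?_
  have hiN : i ≤ N := Nat.lt_succ_iff.1 (Finset.mem_range.1 hi)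
  have hmono : (Polynomial.monomial i (Q.coeff i) : Polynomial ℂ)
      = C (Q.coeff i) * X^i := (Polynomial.C_mul_X_pow_eq_monomial).symm
  rw [hmono, Pair_q_smul, key_mono s z N i hiN]
  have hsm : C (Q.coeff i) * (X^i : Polynomial ℂ) = (Q.coeff i) • (X^i : Polynomial ℂ) := by
    rw [Polynomial.smul_eq_C_mul]
  have : Ghom (C (Q.coeff i) * X^i) = (Q.coeff i) * (hpow s N i).eval z := by
    show Gfun (C (Q.coeff i) * X^i) = _
    rw [hGfun, hsm]
    simp only [hf_smul, Polynomial.eval_smul, smul_eq_mul]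
    rfl
  rw [this]
  ring

lemma natDegree_hpow_le (s : ℂ) (N m : ℕ) : (hpow s N m).natDegree ≤ m := by
  unfold hpow hf
  refine Polynomial.natDegree_sum_le_of_forall_le _ _ fun k _ => ?_
  refine le_trans (Polynomial.natDegree_smul_le _ _) ?_
  refine le_trans (Polynomial.natDegree_iterate_derivative _ _) ?_
  rw [natDegree_X_pow]
  omega

lemma hpow_top_props (s : ℂ) (N : ℕ) :
    (hpow s N N) ≠ 0 ∧ (hpow s N N).natDegree = N := by
  have hc := coeff_hpow_top s N
  have hne : hpow s N N ≠ 0 := by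
    intro h
    rw [h, Polynomial.coeff_zero] at hc
    exact zero_ne_one hc
  exact ⟨hne, le_antisymm (natDegree_hpow_le s N N)
    (Polynomial.le_natDegree_of_ne_zero (by rw [hc]; exact one_ne_zero))⟩


/-- Every zero of the heat-evolved power `P_t^n = e^{−(t/(2αn))∂_z²} P^n`, where
`P^n(z) = ∏_j (z−λ_j)^{nα_j}` and `α = Σ_j α_j`, lies within distance
`2√t·√(1 + 1/(2nα))` of some initial zero `λ_j`. -/
theorem heat_evolved_power_zeros_near_initial
    (d : ℕ) (lam : Fin d → ℂ) (hinj : Function.Injective lam)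
    (a : Fin d → ℕ) (hpos : ∀ j, 0 < a j) (A : ℕ) (hA : A = ∑ j, a j)
    (n : ℕ) (hn : 0 < n) (t : ℝ) (ht : 0 < t)
    (Pn : Polynomial ℂ) (hPn : Pn = ∏ j, (X - C (lam j)) ^ (n * a j)) (z : ℂ)
    (hz : (heatFlow ((t : ℂ) / ((A : ℂ) * (n : ℂ))) Pn).eval z = 0) :
    ∃ j, ‖z - lam j‖
        ≤ 2 * Real.sqrt t * Real.sqrt (1 + 1 / (2 * (n : ℝ) * (A : ℝ))) := by
  classical
  by_cases hd0 : d = 0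
  · exfalso
    subst hd0
    have hPn1 : Pn = 1 := by rw [hPn]; simp
    rw [hPn1] at hz
    unfold heatFlow at hz
    simp at hz
  · have hd : 0 < d := Nat.pos_of_ne_zero hd0
    have hApos : 0 < A := by
      have j0 : Fin d := ⟨0, hd⟩
      have h1 : a j0 ≤ ∑ j, a j :=
        Finset.single_le_sum (fun j _ => Nat.zero_le (a j)) (Finset.mem_univ j0)
      have h2 := hpos j0
      omega
    set N := n * A with hN
    have hN1 : 1 ≤ N := by
      rw [hN]
      exact Nat.one_le_iff_ne_zero.2 (by positivity)
    have hdegPn : Pn.natDegree = N := by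
      rw [hPn, Polynomial.natDegree_prod _ _
        (fun j _ => pow_ne_zero _ (Polynomial.X_sub_C_ne_zero (lam j)))]
      have : ∀ j : Fin d, ((X - C (lam j)) ^ (n * a j)).natDegree = n * a j := by
        intro j
        rw [Polynomial.natDegree_pow, natDegree_X_sub_C, mul_one]
      rw [Finset.sum_congr rfl (fun j _ => this j), ← Finset.mul_sum, ← hA]
    set s₀ : ℝ := t / ((A:ℝ) * (n:ℝ)) with hs₀
    have hAn : (0:ℝ) < (A:ℝ) * (n:ℝ) := by
      have h1 : (0:ℝ) < (A:ℝ) := by exact_mod_cast hApos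
      have h2 : (0:ℝ) < (n:ℝ) := by exact_mod_cast hn
      positivity
    have hs₀pos : 0 < s₀ := div_pos ht hAn
    have hscast : ((t:ℂ)) / ((A:ℂ) * (n:ℂ)) = ((s₀:ℝ):ℂ) := by
      rw [hs₀]
      push_cast
      ring
    have hheat : heatFlow ((t:ℂ)/((A:ℂ)*(n:ℂ))) Pn = hf ((s₀:ℝ):ℂ) (N+1) Pn := by
      rw [hscast]
      unfold heatFlow hf
      rw [hdegPn]
    rw [hheat] at hz
    set f := hpow ((s₀:ℝ):ℂ) N N with hfdef
    set pz := f.comp (C z - X) with hpz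
    have hpair : Pair N pz Pn = 0 := by
      rw [hpz, hfdef, key_identity _ z N Pn (le_of_eq hdegPn), hz, mul_zero]
    obtain ⟨hfne, hfdeg⟩ := hpow_top_props ((s₀:ℝ):ℂ) N
    have hpzdeg : pz.natDegree = N := by
      rw [hpz, Polynomial.natDegree_comp]
      have h1 : (C z - X : Polynomial ℂ).natDegree = 1 := by
        have h2 : (C z - X : Polynomial ℂ) = -(X - C z) := by ring
        rw [h2, Polynomial.natDegree_neg, natDegree_X_sub_C]
      rw [h1, mul_one, hfdef, hfdeg]
    have hpzne : pz ≠ 0 := by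
      intro h
      rw [h, Polynomial.natDegree_zero] at hpzdeg
      omega
    set r := 2 * Real.sqrt t with hr
    set R := 2 * Real.sqrt t * Real.sqrt (1 + 1/(2*(n:ℝ)*(A:ℝ))) with hR
    have hsqrtt : 0 < Real.sqrt t := Real.sqrt_pos.2 ht
    have hrpos : 0 < r := by rw [hr]; positivity
    have hrR : r < R := by
      rw [hR]
      have hx : (0:ℝ) < 1/(2*(n:ℝ)*(A:ℝ)) := by
        have h1 : (0:ℝ) < (A:ℝ) := by exact_mod_cast hApos
        have h2 : (0:ℝ) < (n:ℝ) := by exact_mod_cast hn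
        positivity
      have h1 : 1 < Real.sqrt (1 + 1/(2*(n:ℝ)*(A:ℝ))) := by
        rw [show (1:ℝ) < Real.sqrt (1 + 1/(2*(n:ℝ)*(A:ℝ))) ↔ (1:ℝ)^2 < 1 + 1/(2*(n:ℝ)*(A:ℝ))
          from Real.lt_sqrt (by norm_num)]
        nlinarith
      calc r = r * 1 := by ring
        _ < r * Real.sqrt (1 + 1/(2*(n:ℝ)*(A:ℝ))) := by
            exact mul_lt_mul_of_pos_left h1 hrpos
        _ = 2 * Real.sqrt t * Real.sqrt (1 + 1/(2*(n:ℝ)*(A:ℝ))) := by rw [hr]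
    have hroots : ∀ x ∈ pz.roots, ‖x - z‖ ≤ r := by
      intro x hx
      have hx0 : pz.eval x = 0 := Polynomial.isRoot_of_mem_roots hx
      rw [hpz, Polynomial.eval_comp, Polynomial.eval_sub, Polynomial.eval_C,
        Polynomial.eval_X] at hx0
      by_contra hgt
      push_neg at hgt
      have habs : ‖z - x‖ = ‖x - z‖ :=
        norm_sub_rev z x
      have htN : s₀ * (N:ℝ) = t := by
        rw [hs₀, hN]
        push_cast
        field_simp
      have hsq : 4 * s₀ * (N:ℝ) ≤ (‖z - x‖)^2 := by
        have h5 : (2 * Real.sqrt t)^2 = 4 * t := by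
          rw [mul_pow, Real.sq_sqrt (le_of_lt ht)]
          ring
        rw [habs]
        nlinarith [norm_nonneg (x - z), hgt]
      exact hermite_ne_zero s₀ hs₀pos N hN1 (z - x) hsq hx0
    obtain ⟨w, hwR, hwroot⟩ := grace N pz Pn z r R (le_of_lt hrpos) hrR hpzne hpzdeg
      hroots (le_of_eq hdegPn) hpair
    rw [hPn, Polynomial.eval_prod] at hwroot
    obtain ⟨j, _, hj⟩ := Finset.prod_eq_zero_iff.1 hwroot
    refine ⟨j, ?_⟩
    have he : Polynomial.eval w ((X - C (lam j))^(n * a j)) = (w - lam j)^(n * a j) := by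
      simp
    rw [he] at hj
    have hw : w = lam j := by
      have hnz : n * a j ≠ 0 := by
        have := hpos j
        positivity
      have := (pow_eq_zero_iff hnz).1 hj
      exact sub_eq_zero.1 this
    rw [← hw]
    calc ‖z - w‖ = ‖w - z‖ := norm_sub_rev z w
      _ ≤ R := le_of_lt hwR
end

section
/- Fix distinct λ_1,…,λ_d ∈ ℂ, α_j > 0, α = Σα_j, and t ≠ 0. For every ε with 0 < ε < (1/2)·min_{i≠j}|λ_i − λ_j|, there exists R > 0 such that for all z ∈ ℂ with |z| > R, the polynomial Q_{z,t}(u) = (t/α)Σ_j α_j ∏_{k≠j}(u−λ_k) + (u−z)∏_j(u−λ_j) has exactly one root in the disk B(z, ε) and exactly one root in each disk B(λ_j, ε), j = 1,…,d; in particular all d+1 roots of Q_{z,t} are simple. -/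
open Polynomial
set_option maxHeartbeats 1600000

noncomputable def cabs : AbsoluteValue ℂ ℝ := NormedField.toAbsoluteValue ℂ

lemma cabs_apply (z : ℂ) : cabs z = ‖z‖ := rfl

lemma cabs_ofReal (r : ℝ) : cabs (r : ℂ) = |r| := by
  rw [cabs_apply, Complex.norm_real, Real.norm_eq_abs]

lemma filter_card_sum_le {α ι : Type*} [Fintype ι] (p : ι → α → Prop)
    [∀ i, DecidablePred (p i)] (h : ∀ x i j, p i x → p j x → i = j) (m : Multiset α) :
    ∑ i, Multiset.card (m.filter (p i)) ≤ Multiset.card m := by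
  induction m using Multiset.induction with
  | empty => simp
  | cons a s ih =>
    simp only [Multiset.filter_cons, Multiset.card_add, Multiset.card_cons,
      Finset.sum_add_distrib]
    have h1 : ∀ i, Multiset.card (if p i a then ({a} : Multiset α) else 0)
        = if p i a then 1 else 0 := by
      intro i; split <;> simp
    have h2 : (∑ i, if p i a then 1 else 0) ≤ 1 := by
      classical
      rw [Finset.sum_boole]
      exact_mod_cast Finset.card_le_one.2 fun i hi j hj => h a i j
        (Finset.mem_filter.1 hi).2 (Finset.mem_filter.1 hj).2
    simp only [h1]
    omega

def pOpt {d : ℕ} (lam : Fin d → ℂ) (z : ℂ) (ε : ℝ) : Option (Fin d) → ℂ → Prop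
  | none => fun u => cabs (u - z) < ε
  | some j => fun u => cabs (u - lam j) < ε

noncomputable instance pOptDec {d : ℕ} (lam : Fin d → ℂ) (z : ℂ) (ε : ℝ) (o : Option (Fin d)) :
    DecidablePred (pOpt lam z ε o) := fun u => by
  cases o with
  | none => exact inferInstanceAs (Decidable (cabs (u - z) < ε))
  | some j => exact inferInstanceAs (Decidable (cabs (u - lam j) < ε))

lemma pow_card_le_prod_real {m : Multiset ℝ} {c : ℝ} (hc : 0 ≤ c)
    (h : ∀ x ∈ m, c ≤ x) : c ^ Multiset.card m ≤ m.prod := by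
  induction m using Multiset.induction with
  | empty => simp
  | cons a s ih =>
    rw [Multiset.prod_cons, Multiset.card_cons, pow_succ, mul_comm (c ^ Multiset.card s) c]
    exact mul_le_mul (h a (Multiset.mem_cons_self a s))
      (ih fun x hx => h x (Multiset.mem_cons_of_mem hx))
      (pow_nonneg hc _) (le_trans hc (h a (Multiset.mem_cons_self a s)))

lemma abs_multiset_prod (m : Multiset ℂ) :
    cabs m.prod = (m.map cabs).prod := by
  induction m using Multiset.induction with
  | empty => simp
  | cons a s ih => simp [ih]

/-- For large `|z|`, the saddle point polynomial
`Q_{z,t}(u) = (t/α)Σ_j α_j ∏_{k≠j}(u−λ_k) + (u−z)∏_j(u−λ_j)` has exactly one root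
(with multiplicity) in `B(z,ε)` and exactly one root in each `B(λ_j,ε)`,
`0 < ε < (1/2)·min_{i≠j}|λ_i−λ_j|`; in particular all `d+1` roots are simple. -/
theorem saddle_points_localized_for_large_z
    (d : ℕ) (lam : Fin d → ℂ) (hinj : Function.Injective lam)
    (a : Fin d → ℝ) (hpos : ∀ j, 0 < a j) (A : ℝ) (hA : A = ∑ j, a j)
    (t : ℂ) (ht : t ≠ 0)
    (Q : ℂ → Polynomial ℂ)
    (hQ : Q = fun z =>
      C (t / (A : ℂ)) *
          ∑ j, C ((a j : ℂ)) * ∏ k ∈ Finset.univ.erase j, (X - C (lam k))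
        + (X - C z) * ∏ j, (X - C (lam j)))
    (ε : ℝ) (hε : 0 < ε) (hεsep : ∀ i j, i ≠ j → 2 * ε < ‖lam i - lam j‖) :
    ∃ R : ℝ, 0 < R ∧ ∀ z : ℂ, R < ‖z‖ →
      (((Q z).roots.filter (fun u => ‖u - z‖ < ε)).card = 1)
      ∧ (∀ j, ((Q z).roots.filter (fun u => ‖u - lam j‖ < ε)).card = 1)
      ∧ (∀ u : ℂ, (Q z).eval u = 0 → (Polynomial.derivative (Q z)).eval u ≠ 0) := by
  change ∃ R : ℝ, 0 < R ∧ ∀ z : ℂ, R < cabs z →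
      (((Q z).roots.filter (fun u => cabs (u - z) < ε)).card = 1)
      ∧ (∀ j, ((Q z).roots.filter (fun u => cabs (u - lam j) < ε)).card = 1)
      ∧ (∀ u : ℂ, (Q z).eval u = 0 → (Polynomial.derivative (Q z)).eval u ≠ 0)
  replace hεsep : ∀ i j, i ≠ j → 2 * ε < cabs (lam i - lam j) := hεsep
  rcases Nat.eq_zero_or_pos d with hd0 | hd0
  · subst hd0
    refine ⟨1, one_pos, fun z hz => ?_⟩
    have hQz : Q z = X - C z := by
      rw [hQ]; simp
    rw [hQz]
    refine ⟨?_, fun j => absurd j.2 (by omega), fun u hu => ?_⟩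
    · rw [roots_X_sub_C]
      simp [Multiset.filter_singleton, hε]
    · simp
  have hne : Nonempty (Fin d) := ⟨⟨0, hd0⟩⟩
  have hA0 : 0 < A := hA ▸ Finset.sum_pos (fun j _ => hpos j) Finset.univ_nonempty
  have hAc : (A : ℂ) ≠ 0 := by exact_mod_cast ne_of_gt hA0
  set T : ℝ := cabs t with hT
  have hT0 : 0 < T := cabs.pos ht
  set M : ℝ := 1 + ε + ∑ j, cabs (lam j) with hM
  have hM1 : 1 + ε ≤ M := by
    have : (0:ℝ) ≤ ∑ j, cabs (lam j) :=
      Finset.sum_nonneg fun j _ => (cabs.nonneg _)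
    linarith
  have hMl : ∀ j, cabs (lam j) ≤ M := by
    intro j
    have h1 : cabs (lam j) ≤ ∑ k, cabs (lam k) :=
      Finset.single_le_sum (fun k _ => cabs.nonneg _) (Finset.mem_univ j)
    have : (0:ℝ) < 1 + ε := by linarith
    simp only [hM]; linarith
  set B : ℝ := ∑ j, (T / A) * a j * ∏ k ∈ Finset.univ.erase j, cabs (lam j - lam k)
    with hB
  have hBj : ∀ j, (T / A) * a j * ∏ k ∈ Finset.univ.erase j, cabs (lam j - lam k) ≤ B := by
    intro j
    refine Finset.single_le_sum
      (f := fun k => (T / A) * a k * ∏ i ∈ Finset.univ.erase k, cabs (lam k - lam i))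
      (fun k _ => ?_) (Finset.mem_univ j)
    have ha := (hpos k).le
    have hp : (0:ℝ) ≤ ∏ i ∈ Finset.univ.erase k, cabs (lam k - lam i) :=
      Finset.prod_nonneg fun i _ => cabs.nonneg _
    have hta : (0:ℝ) ≤ T / A := by positivity
    exact mul_nonneg (mul_nonneg hta ha) hp
  have hB0 : 0 ≤ B := by
    have j0 : Fin d := ⟨0, hd0⟩
    refine le_trans ?_ (hBj j0)
    have ha := (hpos j0).le
    have hp : (0:ℝ) ≤ ∏ i ∈ Finset.univ.erase j0, cabs (lam j0 - lam i) :=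
      Finset.prod_nonneg fun i _ => cabs.nonneg _
    have hta : (0:ℝ) ≤ T / A := by positivity
    exact mul_nonneg (mul_nonneg hta ha) hp
  set R : ℝ := 3*M + 2*ε + 2*T/ε + 2^d*(T+1) + B/ε^d with hR
  have hR0 : 0 < R := by
    have h1 : (0:ℝ) < 3*M := by linarith
    have h2 : (0:ℝ) ≤ 2*T/ε := div_nonneg (by linarith) hε.le
    have h3 : (0:ℝ) ≤ 2^d*(T+1) := mul_nonneg (pow_nonneg (by norm_num) d) (by linarith)
    have h4 : (0:ℝ) ≤ B/ε^d := div_nonneg hB0 (pow_nonneg hε.le d)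
    have := hε
    rw [hR]
    linarith
  refine ⟨R, hR0, fun z hz => ?_⟩
  have hQz : Q z = C (t / (A : ℂ)) *
          ∑ j, C ((a j : ℂ)) * ∏ k ∈ Finset.univ.erase j, (X - C (lam k))
        + (X - C z) * ∏ j, (X - C (lam j)) := by rw [hQ]
  have heval : ∀ u : ℂ, (Q z).eval u =
      (t / (A:ℂ)) * ∑ j, (a j : ℂ) * ∏ k ∈ Finset.univ.erase j, (u - lam k)
      + (u - z) * ∏ j, (u - lam j) := by
    intro u
    rw [hQz]
    simp [eval_prod, eval_finset_sum]
  have hmono2 : ((X - C z) * ∏ j, (X - C (lam j))).Monic :=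
    (monic_X_sub_C z).mul (monic_prod_of_monic _ _ fun j _ => monic_X_sub_C _)
  have hdeg2 : ((X - C z) * ∏ j, (X - C (lam j))).degree = ((d+1 : ℕ) : WithBot ℕ) := by
    rw [degree_mul, degree_X_sub_C, degree_prod]
    simp [degree_X_sub_C]
    rw [add_comm]
  have hdeg1 : (C (t / (A : ℂ)) *
      ∑ j, C ((a j : ℂ)) * ∏ k ∈ Finset.univ.erase j, (X - C (lam k))).degree
      < ((d+1 : ℕ) : WithBot ℕ) := by
    refine lt_of_le_of_lt (le_trans (degree_mul_le _ _)
      (add_le_of_nonpos_of_le degree_C_le le_rfl)) ?_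
    refine lt_of_le_of_lt (degree_sum_le _ _) ?_
    rw [Finset.sup_lt_iff (by exact_mod_cast WithBot.bot_lt_coe _)]
    intro j _
    refine lt_of_le_of_lt (le_trans (degree_mul_le _ _)
      (add_le_of_nonpos_of_le degree_C_le le_rfl)) ?_
    refine lt_of_le_of_lt (degree_prod_le _ _) ?_
    simp only [degree_X_sub_C]
    refine lt_of_le_of_lt (Finset.sum_le_card_nsmul _ _ 1 fun k _ => le_rfl) ?_
    rw [Finset.card_erase_of_mem (Finset.mem_univ j), Finset.card_univ, Fintype.card_fin]
    have : ((d-1 : ℕ) : WithBot ℕ) < ((d+1:ℕ) : WithBot ℕ) := by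
      exact_mod_cast by omega
    simpa using this
  have hmonic : (Q z).Monic := by
    rw [hQz]
    exact hmono2.add_of_right (by rw [hdeg2]; exact hdeg1)
  have hdegQ : (Q z).degree = ((d+1:ℕ) : WithBot ℕ) := by
    rw [hQz, degree_add_eq_right_of_degree_lt (by rw [hdeg2]; exact hdeg1), hdeg2]
  have hcard : Multiset.card (Q z).roots = d+1 := by
    rw [splits_iff_card_roots.1 (IsAlgClosed.splits _),
      natDegree_eq_of_degree_eq_some hdegQ]
  have hfact : ∀ μ : ℂ, cabs ((Q z).eval μ)
      = (((Q z).roots).map (fun r => cabs (μ - r))).prod := by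
    intro μ
    conv_lhs => rw [(IsAlgClosed.splits (Q z)).eq_prod_roots_of_monic hmonic]
    rw [eval_multiset_prod, Multiset.map_map, abs_multiset_prod, Multiset.map_map]
    congr 1
    apply Multiset.map_congr rfl
    intro r _
    simp
  set az : ℝ := cabs z with haz
  set L : ℝ := az - M - ε with hLdef
  have hz' : 3*M + 2*ε + 2*T/ε + 2^d*(T+1) + B/ε^d < az := by rw [← hR]; exact hz
  have hTε : 0 < T/ε := div_pos hT0 hε
  have h2Tε : (0:ℝ) ≤ 2*T/ε := by positivity
  have h2d : (0:ℝ) < 2^d*(T+1) := by positivity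
  have hBε : (0:ℝ) ≤ B/ε^d := div_nonneg hB0 (pow_nonneg hε.le d)
  have hM0 : (0:ℝ) < M := by linarith
  have hzM2 : M + 2*ε < az := by linarith
  have hzT : M + 2*(T/ε) < az := by
    have h : 2*(T/ε) = 2*T/ε := by ring
    rw [h]; linarith
  have hLε : ε < L := by rw [hLdef]; linarith
  have hL1 : 1 ≤ L := by rw [hLdef]; linarith
  have hL0 : 0 < L := by linarith
  have hεd : (0:ℝ) < ε^d := pow_pos hε d
  have hLB : B < L * ε^d := by
    have h5 : B/ε^d < L := by rw [hLdef]; linarith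
    calc B = (B/ε^d) * ε^d := by field_simp
    _ < L * ε^d := by exact mul_lt_mul_of_pos_right h5 hεd
  have hL2 : az + M ≤ 2*L := by rw [hLdef]; linarith
  have hLT : T * 2^(d-1) < L^2 := by
    have h1 : (2:ℝ)^(d-1) ≤ 2^d := pow_le_pow_right₀ (by norm_num) (by omega)
    have hp : (0:ℝ) < 2^d := pow_pos (by norm_num) d
    have h3 : 2^d*(T+1) < L := by rw [hLdef]; linarith
    have h4 : 2^d*(T+1) = T*2^d + 2^d := by ring
    have h5 : T * 2^(d-1) ≤ T * 2^d := mul_le_mul_of_nonneg_left h1 hT0.le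
    have h6 : L ≤ L^2 := by nlinarith [mul_nonneg hL0.le (sub_nonneg.2 hL1)]
    linarith
  -- key algebraic bound for roots
  have hstep : ∀ u : ℂ, (Q z).eval u = 0 → ∀ L' : ℝ, 0 < L' →
      (∀ k, L' ≤ cabs (u - lam k)) → cabs (u - z) * L' ≤ T := by
    intro u hu L' hL' hk
    have heq : (u - z) * ∏ j, (u - lam j)
        = -(t/(A:ℂ) * ∑ j, (a j:ℂ) * ∏ k ∈ Finset.univ.erase j, (u - lam k)) := by
      have h0 := heval u
      rw [hu] at h0
      linear_combination -h0
    set P : ℝ := ∏ j, cabs (u - lam j) with hP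
    have hP0 : 0 < P :=
      Finset.prod_pos fun j _ => lt_of_lt_of_le hL' (hk j)
    have h1 : cabs (u - z) * P
        = (T/A) * cabs (∑ j, (a j:ℂ) * ∏ k ∈ Finset.univ.erase j, (u - lam k)) := by
      rw [hP, ← cabs.map_prod, ← map_mul, heq, map_neg_eq_map, map_mul, hT]
      congr 1
      rw [map_div₀]
      congr 1
      exact cabs_ofReal A |>.trans (abs_of_pos hA0)
    have h2 : cabs (∑ j, (a j:ℂ) * ∏ k ∈ Finset.univ.erase j, (u - lam k)) * L'
        ≤ A * P := by
      calc cabs (∑ j, (a j:ℂ) * ∏ k ∈ Finset.univ.erase j, (u - lam k)) * L'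
          ≤ (∑ j, a j * ∏ k ∈ Finset.univ.erase j, cabs (u - lam k)) * L' := by
            refine mul_le_mul_of_nonneg_right ?_ hL'.le
            refine le_trans (cabs.sum_le _ _) (Finset.sum_le_sum fun j _ => ?_)
            rw [map_mul, cabs.map_prod, cabs_ofReal, abs_of_pos (hpos j)]
        _ = ∑ j, a j * ((∏ k ∈ Finset.univ.erase j, cabs (u - lam k)) * L') := by
            rw [Finset.sum_mul]; congr 1; ext j; ring
        _ ≤ ∑ j, a j * P := by
            refine Finset.sum_le_sum fun j _ => ?_
            refine mul_le_mul_of_nonneg_left ?_ (hpos j).le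
            calc (∏ k ∈ Finset.univ.erase j, cabs (u - lam k)) * L'
                ≤ (∏ k ∈ Finset.univ.erase j, cabs (u - lam k))
                  * cabs (u - lam j) := by
                  refine mul_le_mul_of_nonneg_left (hk j)
                    (Finset.prod_nonneg fun k _ => cabs.nonneg _)
              _ = P := Finset.prod_erase_mul _ _ (Finset.mem_univ j)
        _ = A * P := by rw [← Finset.sum_mul, ← hA]
    have h3 : cabs (u - z) * P * L' ≤ T * P := by
      calc cabs (u - z) * P * L'
          = (T/A) * (cabs (∑ j, (a j:ℂ) * ∏ k ∈ Finset.univ.erase j, (u - lam k)) * L') := by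
            rw [h1]; ring
        _ ≤ (T/A) * (A * P) := by
            refine mul_le_mul_of_nonneg_left h2 (by positivity)
        _ = T * P := by field_simp
    have := (mul_le_mul_iff_of_pos_right hP0).1 (by linarith [h3] : cabs (u - z) * L' * P ≤ T * P)
    exact this
  -- localization of roots
  have hQne : Q z ≠ 0 := hmonic.ne_zero
  have hloc : ∀ u ∈ (Q z).roots, ¬(cabs (u - z) < ε) →
      ∃ k, cabs (u - lam k) < ε := by
    intro u hu hnear
    by_contra hcon
    push_neg at hcon
    have hu0 : (Q z).eval u = 0 := (mem_roots'.1 hu).2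
    have e1 : cabs (u - z) * ε ≤ T := hstep u hu0 ε hε hcon
    have huzb : cabs (u - z) ≤ T/ε := by
      rw [le_div_iff₀ hε]; exact e1
    have hL2' : 0 < az - M - T/ε := by linarith
    have hzu : ∀ k, az - M - T/ε ≤ cabs (u - lam k) := by
      intro k
      have t1 : az - cabs (lam k) ≤ cabs (z - lam k) :=
        AbsoluteValue.le_sub cabs z (lam k)
      have t2 : cabs (z - lam k) - cabs (z - u) ≤ cabs (u - lam k) := by
        have := AbsoluteValue.le_sub cabs (z - lam k) (z - u)
        have heq2 : (z - lam k) - (z - u) = u - lam k := by ring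
        rw [heq2] at this; linarith
      have t3 : cabs (z - u) = cabs (u - z) := by rw [cabs.map_sub]
      have := hMl k
      linarith
    have e2 : cabs (u - z) * (az - M - T/ε) ≤ T := hstep u hu0 _ hL2' hzu
    have key : T < ε * (az - M - T/ε) := by
      have : T/ε < az - M - T/ε := by linarith
      calc T = ε * (T/ε) := by field_simp
      _ < ε * (az - M - T/ε) := by exact mul_lt_mul_of_pos_left this hε
    have : cabs (u - z) < ε := by
      by_contra hge
      push_neg at hge
      nlinarith
    exact hnear this
  have habsTA : cabs (t/(A:ℂ)) = T/A := by
    rw [map_div₀, hT]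
    congr 1
    rw [cabs_ofReal]
    exact abs_of_pos hA0
  -- at least one root near z
  have hnearz : ∃ r ∈ (Q z).roots, cabs (r - z) < ε := by
    by_contra hcon
    push_neg at hcon
    have hlow : ∀ x ∈ Multiset.map (fun r => cabs (z - r)) (Q z).roots, L ≤ x := by
      intro x hx
      obtain ⟨r, hr, rfl⟩ := Multiset.mem_map.1 hx
      obtain ⟨k, hk⟩ := hloc r hr (not_lt.2 (hcon r hr))
      have t1 : cabs (z - lam k) ≤ cabs (z - r) + cabs (r - lam k) :=
        AbsoluteValue.sub_le cabs z r (lam k)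
      have t2 : az - cabs (lam k) ≤ cabs (z - lam k) :=
        AbsoluteValue.le_sub cabs z (lam k)
      have := hMl k
      rw [hLdef]
      linarith
    have h1 : L^(d+1) ≤ cabs ((Q z).eval z) := by
      rw [hfact z]
      have hp := pow_card_le_prod_real hL0.le hlow
      rwa [Multiset.card_map, hcard] at hp
    have h2 : cabs ((Q z).eval z) ≤ T * (az + M)^(d-1) := by
      have he : (Q z).eval z
          = (t/(A:ℂ)) * ∑ j, (a j:ℂ) * ∏ k ∈ Finset.univ.erase j, (z - lam k) := by
        rw [heval z]; simp
      rw [he, map_mul, habsTA]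
      have hzM' : ∀ k, cabs (z - lam k) ≤ az + M := by
        intro k
        have h := cabs.add_le z (-lam k)
        rw [← sub_eq_add_neg, map_neg_eq_map] at h
        exact le_trans h (by have := hMl k; rw [haz]; linarith)
      have hb : cabs (∑ j, (a j:ℂ) * ∏ k ∈ Finset.univ.erase j, (z - lam k))
          ≤ A * (az+M)^(d-1) := by
        refine le_trans (cabs.sum_le _ _) ?_
        have hterm : ∀ j, cabs ((a j:ℂ) * ∏ k ∈ Finset.univ.erase j, (z - lam k))
            ≤ a j * (az+M)^(d-1) := by
          intro j
          rw [map_mul, cabs.map_prod, cabs_ofReal, abs_of_pos (hpos j)]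
          refine mul_le_mul_of_nonneg_left ?_ (hpos j).le
          have hpp : (∏ k ∈ Finset.univ.erase j, cabs (z - lam k))
              ≤ ∏ _k ∈ Finset.univ.erase j, (az + M) :=
            Finset.prod_le_prod (fun k _ => cabs.nonneg _) (fun k _ => hzM' k)
          rwa [Finset.prod_const, Finset.card_erase_of_mem (Finset.mem_univ j),
            Finset.card_univ, Fintype.card_fin] at hpp
        refine le_trans (Finset.sum_le_sum fun j _ => hterm j) ?_
        rw [← Finset.sum_mul, ← hA]
      calc (T/A) * cabs (∑ j, (a j:ℂ) * ∏ k ∈ Finset.univ.erase j, (z - lam k))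
          ≤ (T/A) * (A * (az+M)^(d-1)) := mul_le_mul_of_nonneg_left hb (by positivity)
        _ = T * (az+M)^(d-1) := by field_simp
    have h3 : T * (az + M)^(d-1) < L^(d+1) := by
      have haz0 : (0:ℝ) ≤ az + M := by
        have h := cabs.nonneg z
        rw [haz]
        linarith
      have hL2' : (az + M)^(d-1) ≤ (2*L)^(d-1) := pow_le_pow_left₀ haz0 hL2 _
      have e1 : T * (az + M)^(d-1) ≤ T * (2^(d-1) * L^(d-1)) := by
        rw [mul_pow] at hL2'
        exact mul_le_mul_of_nonneg_left hL2' hT0.le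
      have e2 : T * (2^(d-1) * L^(d-1)) = (T * 2^(d-1)) * L^(d-1) := by ring
      have e3 : (T * 2^(d-1)) * L^(d-1) < L^2 * L^(d-1) :=
        mul_lt_mul_of_pos_right hLT (pow_pos hL0 _)
      have e4 : L^2 * L^(d-1) = L^(d+1) := by
        rw [← pow_add]
        congr 1
        omega
      linarith
    linarith
  -- at least one root near each lam j
  have hnearlam : ∀ j, ∃ r ∈ (Q z).roots, cabs (r - lam j) < ε := by
    intro j
    by_contra hcon
    push_neg at hcon
    obtain ⟨r₀, hr₀m, hr₀⟩ := hnearz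
    obtain ⟨m', hm'⟩ := Multiset.exists_cons_of_mem hr₀m
    have hcardm' : Multiset.card m' = d := by
      have hc := hcard
      rw [hm'] at hc
      simpa using hc
    have hmem' : ∀ x ∈ m', x ∈ (Q z).roots := fun x hx => by
      rw [hm']; exact Multiset.mem_cons_of_mem hx
    have hεm' : ∀ y ∈ m'.map (fun r => cabs (lam j - r)), ε ≤ y := by
      intro y hy
      obtain ⟨r, hr, rfl⟩ := Multiset.mem_map.1 hy
      have hrroot := hmem' r hr
      by_cases hnear : cabs (r - z) < ε
      · have t1 : cabs (z - lam j) ≤ cabs (z - r) + cabs (r - lam j) :=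
          AbsoluteValue.sub_le cabs z r (lam j)
        have t2 : az - cabs (lam j) ≤ cabs (z - lam j) :=
          AbsoluteValue.le_sub cabs z (lam j)
        have t3 : cabs (z - r) = cabs (r - z) := cabs.map_sub z r
        have t4 : cabs (lam j - r) = cabs (r - lam j) :=
          cabs.map_sub (lam j) r
        have := hMl j
        rw [hLdef] at hLε
        linarith
      · obtain ⟨k, hk⟩ := hloc r hrroot hnear
        by_cases hkj : k = j
        · subst hkj
          exact absurd hk (not_lt.2 (hcon r hrroot))
        · have hsep := hεsep j k (fun h => hkj h.symm)
          have t1 : cabs (lam j - lam k)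
              ≤ cabs (lam j - r) + cabs (r - lam k) :=
            AbsoluteValue.sub_le cabs (lam j) r (lam k)
          linarith
    have hr₀b : L ≤ cabs (lam j - r₀) := by
      have t1 : cabs (z - lam j) ≤ cabs (z - r₀) + cabs (r₀ - lam j) :=
        AbsoluteValue.sub_le cabs z r₀ (lam j)
      have t2 : az - cabs (lam j) ≤ cabs (z - lam j) :=
        AbsoluteValue.le_sub cabs z (lam j)
      have t3 : cabs (z - r₀) = cabs (r₀ - z) := cabs.map_sub z r₀
      have t4 : cabs (lam j - r₀) = cabs (r₀ - lam j) :=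
        cabs.map_sub (lam j) r₀
      have := hMl j
      rw [hLdef]
      linarith
    have hlowprod : L * ε^d ≤ cabs ((Q z).eval (lam j)) := by
      rw [hfact (lam j), hm', Multiset.map_cons, Multiset.prod_cons]
      have hp := pow_card_le_prod_real hε.le hεm'
      rw [Multiset.card_map, hcardm'] at hp
      exact mul_le_mul hr₀b hp (by positivity) (le_trans hL0.le hr₀b)
    have hupper : cabs ((Q z).eval (lam j)) ≤ B := by
      have he : (Q z).eval (lam j)
          = (t/(A:ℂ)) * ((a j:ℂ) * ∏ k ∈ Finset.univ.erase j, (lam j - lam k)) := by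
        rw [heval]
        have hz2 : (∏ k, (lam j - lam k)) = 0 :=
          Finset.prod_eq_zero (Finset.mem_univ j) (by simp)
        rw [hz2, mul_zero, add_zero]
        congr 1
        refine Finset.sum_eq_single j (fun b _ hbj => ?_) (by simp)
        have hz3 : (∏ k ∈ Finset.univ.erase b, (lam j - lam k)) = 0 :=
          Finset.prod_eq_zero (Finset.mem_erase.2 ⟨fun h => hbj h.symm, Finset.mem_univ j⟩)
            (by simp)
        rw [hz3, mul_zero]
      rw [he, map_mul, habsTA, map_mul, cabs.map_prod, cabs_ofReal,
        abs_of_pos (hpos j)]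
      have := hBj j
      linarith [this]
    linarith
  -- counting via pairwise exclusive disks
  set p : Option (Fin d) → ℂ → Prop := pOpt lam z ε with hpdef
  have hzlam : ∀ (x : ℂ) (j : Fin d),
      cabs (x - z) < ε → ¬ cabs (x - lam j) < ε := by
    intro x j h1 h2
    have t1 : cabs (z - lam j) ≤ cabs (z - x) + cabs (x - lam j) :=
      AbsoluteValue.sub_le cabs z x (lam j)
    have t2 : az - cabs (lam j) ≤ cabs (z - lam j) :=
      AbsoluteValue.le_sub cabs z (lam j)
    have t3 : cabs (z - x) = cabs (x - z) := cabs.map_sub z x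
    have := hMl j
    linarith
  have hexcl : ∀ (x : ℂ) (o₁ o₂ : Option (Fin d)), p o₁ x → p o₂ x → o₁ = o₂ := by
    rintro x (_|i) (_|j) h1 h2
    · rfl
    · exact absurd h2 (hzlam x j h1)
    · exact absurd h1 (hzlam x i h2)
    · by_contra hne2
      have hij : i ≠ j := fun h => hne2 (by rw [h])
      have hsep := hεsep i j hij
      have t1 : cabs (lam i - lam j)
          ≤ cabs (lam i - x) + cabs (x - lam j) :=
        AbsoluteValue.sub_le cabs (lam i) x (lam j)
      have t2 : cabs (lam i - x) = cabs (x - lam i) := cabs.map_sub _ _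
      have h1' : cabs (x - lam i) < ε := h1
      have h2' : cabs (x - lam j) < ε := h2
      linarith
  have hsum0 := filter_card_sum_le p hexcl (Q z).roots
  rw [Fintype.sum_option, hcard] at hsum0
  have hsum : Multiset.card (Multiset.filter (p none) (Q z).roots)
      + ∑ j, Multiset.card (Multiset.filter (p (some j)) (Q z).roots) ≤ d + 1 := hsum0
  have hge0 : 1 ≤ Multiset.card (Multiset.filter (p none) (Q z).roots) := by
    obtain ⟨r, hr, hrε⟩ := hnearz
    exact Multiset.card_pos_iff_exists_mem.2 ⟨r, Multiset.mem_filter.2 ⟨hr, hrε⟩⟩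
  have hgej : ∀ j, 1 ≤ Multiset.card (Multiset.filter (p (some j)) (Q z).roots) := by
    intro j
    obtain ⟨r, hr, hrε⟩ := hnearlam j
    exact Multiset.card_pos_iff_exists_mem.2 ⟨r, Multiset.mem_filter.2 ⟨hr, hrε⟩⟩
  have hsumj : d ≤ ∑ j, Multiset.card (Multiset.filter (p (some j)) (Q z).roots) := by
    have h := Finset.card_nsmul_le_sum Finset.univ
      (fun j => Multiset.card (Multiset.filter (p (some j)) (Q z).roots)) 1
      (fun j _ => hgej j)
    simpa using h
  have hc0 : Multiset.card (Multiset.filter (p none) (Q z).roots) = 1 := by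
    set c0 := Multiset.card (Multiset.filter (p none) (Q z).roots) with hc0def
    set S := ∑ j, Multiset.card (Multiset.filter (p (some j)) (Q z).roots) with hSdef
    omega
  have hcj : ∀ j, Multiset.card (Multiset.filter (p (some j)) (Q z).roots) = 1 := by
    intro j
    have hsplit : Multiset.card (Multiset.filter (p (some j)) (Q z).roots)
        + ∑ k ∈ Finset.univ.erase j, Multiset.card (Multiset.filter (p (some k)) (Q z).roots)
        = ∑ k, Multiset.card (Multiset.filter (p (some k)) (Q z).roots) :=
      Finset.add_sum_erase Finset.univ
        (fun k => Multiset.card (Multiset.filter (p (some k)) (Q z).roots))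
        (Finset.mem_univ j)
    have herase : (d-1 : ℕ)
        ≤ ∑ k ∈ Finset.univ.erase j, Multiset.card (Multiset.filter (p (some k)) (Q z).roots) := by
      have h := Finset.card_nsmul_le_sum (Finset.univ.erase j)
        (fun k => Multiset.card (Multiset.filter (p (some k)) (Q z).roots)) 1
        (fun k _ => hgej k)
      rw [Finset.card_erase_of_mem (Finset.mem_univ j), Finset.card_univ,
        Fintype.card_fin] at h
      simpa using h
    have herase' : d ≤ 1 + ∑ k ∈ Finset.univ.erase j,
        Multiset.card (Multiset.filter (p (some k)) (Q z).roots) := by omega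
    have hle : Multiset.card (Multiset.filter (p (some j)) (Q z).roots) ≤ 1 := by
      linarith [hsplit, hsum, hge0, herase']
    exact le_antisymm hle (hgej j)
  refine ⟨hc0, fun j => hcj j, ?_⟩
  -- simplicity
  intro u hu hderiv
  have hune : u ∈ (Q z).roots := mem_roots'.2 ⟨hQne, hu⟩
  have hdne : derivative (Q z) ≠ 0 := by
    intro h0
    have hdegQn : (Q z).natDegree = d + 1 := natDegree_eq_of_degree_eq_some hdegQ
    have hc1 : (Q z).coeff (d+1) = 1 := by
      have h := hmonic.coeff_natDegree
      rwa [hdegQn] at h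
    have h2 := coeff_derivative (Q z) d
    rw [h0, coeff_zero, hc1, one_mul] at h2
    exact Nat.cast_add_one_ne_zero d h2.symm
  have hm1 : 0 < rootMultiplicity u (derivative (Q z)) := (rootMultiplicity_pos hdne).2 hderiv
  have hm2 : rootMultiplicity u (derivative (Q z)) = rootMultiplicity u (Q z) - 1 :=
    derivative_rootMultiplicity_of_root hu
  have hmult : 2 ≤ rootMultiplicity u (Q z) := by
    set r1 := rootMultiplicity u (Q z)
    set r2 := rootMultiplicity u (derivative (Q z))
    omega
  have hcount : 2 ≤ Multiset.count u (Q z).roots := by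
    rw [count_roots]; exact hmult
  by_cases hnear : cabs (u - z) < ε
  · have hle := Multiset.count_le_card u (Multiset.filter (p none) (Q z).roots)
    rw [Multiset.count_filter_of_pos (p := p none) (a := u) (s := (Q z).roots) hnear] at hle
    rw [hc0] at hle
    omega
  · obtain ⟨k, hk⟩ := hloc u hune hnear
    have hle := Multiset.count_le_card u (Multiset.filter (p (some k)) (Q z).roots)
    rw [Multiset.count_filter_of_pos (p := p (some k)) (a := u) (s := (Q z).roots) hk] at hle
    rw [hcj k] at hle
    omega
end
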